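/- arXiv:2108.06814 — 4 statements merged into one kernel-verified Lean document; each statement's English description precedes it below -/
import Mathlib

section
/- Let G be a finitely generated group with an orientation preserving C^1 action on the circle. If G acts with a global fixed point and every group homomorphism G → (ℝ,+) is trivial (i.e., H^1(G,ℝ) = 0), then G acts trivially: every element of G acts as the identity diffeomorphism of the circle. -/
noncomputable section

open MeasureTheory

/-- The circle `S¹ = ℝ/ℤ`. -/
abbrev 𝕊 : Type := AddCircle (1 : ℝ)

/-- `F : ℝ → ℝ` is a lift of the circle bijection `f` witnessing that `f` is an
orientation preserving homeomorphism of the circle: `F` is a strictly increasing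
homeomorphism of `ℝ` (equivalently, continuous and strictly increasing) satisfying
`F (x + 1) = F x + 1`, and projecting to `f`. -/
def IsOPLift (f : Equiv.Perm 𝕊) (F : ℝ → ℝ) : Prop :=
  Continuous F ∧ StrictMono F ∧ (∀ x : ℝ, F (x + 1) = F x + 1) ∧
    ∀ x : ℝ, f (x : 𝕊) = (F x : 𝕊)

/-- `f` is an orientation preserving homeomorphism of the circle. -/
def IsOPHomeo (f : Equiv.Perm 𝕊) : Prop := ∃ F : ℝ → ℝ, IsOPLift f F

/-- `F` is a lift witnessing that `f` is an orientation preserving `C¹` diffeomorphism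
of the circle: an orientation preserving lift which is `C¹` with nowhere vanishing
derivative. -/
def IsC1Lift (f : Equiv.Perm 𝕊) (F : ℝ → ℝ) : Prop :=
  IsOPLift f F ∧ ContDiff ℝ 1 F ∧ ∀ x : ℝ, deriv F x ≠ 0

/-- `f` is an orientation preserving `C¹` diffeomorphism of the circle, i.e. an element
of `Diff¹₊(S¹)`. -/
def IsC1Diffeo (f : Equiv.Perm 𝕊) : Prop := ∃ F : ℝ → ℝ, IsC1Lift f F

lemma coe_eq_coe_iff {r s : ℝ} : (r : 𝕊) = (s : 𝕊) ↔ ∃ k : ℤ, r - s = k := by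
  rw [QuotientAddGroup.eq_iff_sub_mem]
  constructor
  · rintro ⟨k, hk⟩; exact ⟨k, by simpa using hk.symm⟩
  · rintro ⟨k, hk⟩; exact ⟨k, by simpa using hk.symm⟩

lemma lift_eq_of_agree {f : Equiv.Perm 𝕊} {F F' : ℝ → ℝ}
    (hF : IsOPLift f F) (hF' : IsOPLift f F') {c : ℝ} (hc : F c = F' c) : F = F' := by
  obtain ⟨hcont, _, _, hproj⟩ := hF
  obtain ⟨hcont', _, _, hproj'⟩ := hF'
  set d : ℝ → ℝ := fun z => F z - F' z with hd
  have hdint : ∀ u : ℝ, ∃ k : ℤ, d u = k := by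
    intro u
    have : (F u : 𝕊) = (F' u : 𝕊) := by rw [← hproj u, ← hproj' u]
    exact coe_eq_coe_iff.1 this
  have hdc : d c = 0 := by simp [hd, hc]
  funext z
  by_contra hz
  obtain ⟨k1, hk1⟩ := hdint z
  obtain ⟨k2, hk2⟩ := hdint c
  have hk12 : k1 ≠ k2 := by
    intro h
    apply hz
    have : d z = d c := by rw [hk1, hk2, h]
    simpa [hd, hc, sub_eq_iff_eq_add, sub_eq_zero] using this.trans hdc
  have hdcont : Continuous d := hcont.sub hcont'
  have hvmem : ((min k1 k2 : ℝ) + 1/2) ∈ Set.uIcc (d c) (d z) := by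
    rw [hk1, hk2, Set.mem_uIcc]
    rcases lt_or_gt_of_ne hk12 with h | h
    · right
      have h1 : (k1 : ℝ) + 1 ≤ k2 := by exact_mod_cast h
      have h2 : (min k1 k2 : ℝ) = k1 := min_eq_left (by linarith)
      rw [h2]
      constructor <;> linarith
    · left
      have h1 : (k2 : ℝ) + 1 ≤ k1 := by exact_mod_cast h
      have h2 : (min k1 k2 : ℝ) = k2 := min_eq_right (by linarith)
      rw [h2]
      constructor <;> linarith
  obtain ⟨u, _, hu⟩ := intermediate_value_uIcc (f := d) (a := c) (b := z)
    hdcont.continuousOn hvmem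
  obtain ⟨k, hk⟩ := hdint u
  have h2 : (2 * k : ℝ) = 2 * (min k1 k2) + 1 := by
    have : (k : ℝ) = (min k1 k2 : ℝ) + 1/2 := by rw [← hk, hu]
    push_cast at this ⊢
    linarith
  have h3 : (2 * k : ℤ) = 2 * min k1 k2 + 1 := by exact_mod_cast h2
  omega

lemma isOPLift_comp {f g : Equiv.Perm 𝕊} {F G : ℝ → ℝ}
    (hF : IsOPLift f F) (hG : IsOPLift g G) : IsOPLift (f * g) (F ∘ G) := by
  obtain ⟨hFc, hFm, hFp, hFl⟩ := hF
  obtain ⟨hGc, hGm, hGp, hGl⟩ := hG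
  refine ⟨hFc.comp hGc, hFm.comp hGm, fun z => by simp [Function.comp, hGp, hFp], fun z => ?_⟩
  simp only [Equiv.Perm.mul_apply, Function.comp]
  rw [hGl z, hFl (G z)]

lemma isOPLift_id : IsOPLift 1 id :=
  ⟨continuous_id, strictMono_id, fun _ => rfl, fun _ => rfl⟩

lemma isC1Lift_sub_int {f : Equiv.Perm 𝕊} {F : ℝ → ℝ} (hF : IsC1Lift f F) (k : ℤ) :
    IsC1Lift f (fun z => F z - k) := by
  obtain ⟨⟨hc, hm, hp, hl⟩, hcd, hdne⟩ := hF
  refine ⟨⟨hc.sub continuous_const, fun a b hab => by simpa using hm hab,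
    fun z => by show F (z+1) - (k:ℝ) = F z - (k:ℝ) + 1; rw [hp]; ring, fun z => ?_⟩,
    hcd.sub contDiff_const, fun z => ?_⟩
  · rw [hl z]
    symm
    rw [coe_eq_coe_iff]
    exact ⟨-k, by push_cast; ring⟩
  · rw [deriv_sub_const]; exact hdne z

lemma exists_normalized_lift {f : Equiv.Perm 𝕊} (hf : IsC1Diffeo f) {c : ℝ}
    (hc : f (c : 𝕊) = (c : 𝕊)) : ∃ F : ℝ → ℝ, IsC1Lift f F ∧ F c = c := by
  obtain ⟨F₀, hF₀⟩ := hf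
  have : (F₀ c : 𝕊) = (c : 𝕊) := by rw [← hF₀.1.2.2.2 c, hc]
  obtain ⟨k, hk⟩ := coe_eq_coe_iff.1 this
  exact ⟨fun z => F₀ z - k, isC1Lift_sub_int hF₀ k, by show F₀ c - (k:ℝ) = c; linarith⟩

lemma key_est {f : ℝ → ℝ} (hf : ContDiff ℝ 1 f) {a : ℝ} (ha : deriv f a = 1) {ε : ℝ}
    (hε : 0 < ε) :
    ∃ δ > 0, ∀ z w : ℝ, |z - a| < δ → |w - a| < δ → |f w - f z - (w - z)| ≤ ε * |w - z| := by
  have hdc : ContinuousAt (deriv f) a := (hf.continuous_deriv le_rfl).continuousAt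
  rw [Metric.continuousAt_iff] at hdc
  obtain ⟨δ, hδ, hd⟩ := hdc ε hε
  refine ⟨δ, hδ, fun z w hz hw => ?_⟩
  have hdiff : ∀ u ∈ Metric.ball a δ, DifferentiableAt ℝ (fun u => f u - u) u :=
    fun u _ => ((hf.differentiable one_ne_zero) u).sub differentiableAt_id
  have hbound : ∀ u ∈ Metric.ball a δ, ‖deriv (fun u => f u - u) u‖ ≤ ε := by
    intro u hu
    have hderiv : deriv (fun u => f u - u) u = deriv f u - 1 := by
      have := (((hf.differentiable one_ne_zero) u).hasDerivAt.sub (hasDerivAt_id u)).deriv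
      exact this
    rw [hderiv, Real.norm_eq_abs]
    have := hd (show dist u a < δ from hu)
    rw [Real.dist_eq, ha] at this
    exact this.le
  have := Convex.norm_image_sub_le_of_norm_deriv_le hdiff hbound (convex_ball a δ)
    (show z ∈ Metric.ball a δ by rwa [Metric.mem_ball, Real.dist_eq])
    (show w ∈ Metric.ball a δ by rwa [Metric.mem_ball, Real.dist_eq])
  have h2 : |f w - w - (f z - z)| ≤ ε * |w - z| := by
    simpa [Real.norm_eq_abs] using this
  have h3 : f w - w - (f z - z) = f w - f z - (w - z) := by ring
  rwa [h3] at h2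

open Filter in
lemma thurston_core {G : Type*} [Group G] (T : Finset G)
    (hT : Subgroup.closure (T : Set G) = ⊤)
    (Φ : G → ℝ → ℝ) (hmul : ∀ g h, Φ (g * h) = Φ g ∘ Φ h) (hone : Φ 1 = id)
    (hC1 : ∀ g, ContDiff ℝ 1 (Φ g)) (a : ℝ) (hfixa : ∀ g, Φ g a = a)
    (hderiv : ∀ g, deriv (Φ g) a = 1)
    (hne : ∀ δ > 0, ∃ z : ℝ, |z - a| < δ ∧ ∃ g, Φ g z ≠ z) :
    ∃ φ : G →* Multiplicative ℝ, φ ≠ 1 := by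
  classical
  -- symmetric generating finset containing 1
  set T' : Finset G := (T ∪ T.image (·⁻¹)) ∪ {1} with hT'
  have hone_mem : (1 : G) ∈ T' := by simp [hT']
  have hne' : T'.Nonempty := ⟨1, hone_mem⟩
  -- every element is a word in T'
  have hword_exists : ∀ g : G, ∃ l : List G, (∀ s ∈ l, s ∈ T') ∧ l.prod = g := by
    intro g
    have hg : g ∈ Submonoid.closure ((T : Set G) ∪ (T : Set G)⁻¹) := by
      rw [← Subgroup.closure_toSubmonoid]
      show g ∈ (Subgroup.closure (T : Set G)).toSubmonoid
      rw [hT]; trivial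
    obtain ⟨l, hl, hlp⟩ := Submonoid.exists_list_of_mem_closure hg
    refine ⟨l, fun s hs => ?_, hlp⟩
    rcases hl s hs with h | h
    · simp [hT', Finset.mem_coe.1 h]
    · have : s⁻¹ ∈ T := by simpa using h
      simp only [hT', Finset.mem_union, Finset.mem_image]
      exact Or.inl (Or.inr ⟨s⁻¹, this, inv_inv s⟩)
  -- the displacement max over generators
  set m : ℝ → ℝ := fun z => T'.sup' hne' (fun s => |Φ s z - z|) with hm
  have hm_nonneg : ∀ z, 0 ≤ m z := fun z =>
    le_trans (by simp [hone]) (Finset.le_sup' (fun s => |Φ s z - z|) hone_mem)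
  have hm_le : ∀ s ∈ T', ∀ z, |Φ s z - z| ≤ m z := fun s hs z =>
    Finset.le_sup' (fun s => |Φ s z - z|) hs
  -- the basic estimate for each group element
  have est : ∀ (g : G) (ε : ℝ), 0 < ε → ∃ δ > 0, ∀ z w : ℝ, |z - a| < δ → |w - a| < δ →
      |Φ g w - Φ g z - (w - z)| ≤ ε * |w - z| :=
    fun g ε hε => key_est (hC1 g) (hderiv g) hε
  -- a uniform δ₀ for the generators with ε = 1
  have hgen : ∀ s : G, ∃ δ > 0, ∀ z w : ℝ, |z - a| < δ → |w - a| < δ →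
      |Φ s w - Φ s z - (w - z)| ≤ 1 * |w - z| := fun s => est s 1 one_pos
  choose dfun dfun_pos dfun_est using hgen
  set δ₀ : ℝ := T'.inf' hne' dfun with hδ₀def
  have hδ₀ : 0 < δ₀ := by
    rw [hδ₀def, Finset.lt_inf'_iff]
    exact fun s _ => dfun_pos s
  have genest : ∀ s ∈ T', ∀ z w : ℝ, |z - a| < δ₀ → |w - a| < δ₀ →
      |Φ s w - Φ s z - (w - z)| ≤ |w - z| := by
    intro s hs z w hz hw
    have hle : δ₀ ≤ dfun s := Finset.inf'_le _ hs
    simpa using dfun_est s z w (lt_of_lt_of_le hz hle) (lt_of_lt_of_le hw hle)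
  have gen1 : ∀ s ∈ T', ∀ z : ℝ, |z - a| < δ₀ → |Φ s z - z| ≤ |z - a| := by
    intro s hs z hz
    have := genest s hs a z (by simpa using hδ₀) hz
    rw [hfixa s] at this
    calc |Φ s z - z| = |Φ s z - a - (z - a)| := by ring_nf
    _ ≤ |z - a| := this
  have hm_small : ∀ z : ℝ, |z - a| < δ₀ → m z ≤ |z - a| := by
    intro z hz
    exact Finset.sup'_le _ _ fun s hs => gen1 s hs z hz
  -- the word-length bound
  have hword : ∀ l : List G, (∀ s ∈ l, s ∈ T') → ∀ z : ℝ, |z - a| < δ₀ / 2 ^ l.length →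
      |Φ l.prod z - z| ≤ (2 ^ l.length - 1) * m z ∧
        |Φ l.prod z - a| ≤ 2 ^ l.length * |z - a| := by
    intro l
    induction l with
    | nil =>
      intro _ z _
      simp [hone]
    | cons s l ih =>
      intro hmem z hz
      have hsl : ∀ t ∈ l, t ∈ T' := fun t ht => hmem t (List.mem_cons_of_mem s ht)
      have hs : s ∈ T' := hmem s List.mem_cons_self
      have hz' : |z - a| < δ₀ / 2 ^ l.length := by
        apply lt_of_lt_of_le hz
        rw [List.length_cons, pow_succ]
        apply div_le_div_of_nonneg_left hδ₀.le (by positivity)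
        nlinarith [pow_pos (show (0:ℝ) < 2 by norm_num) l.length]
      obtain ⟨ih1, ih2⟩ := ih hsl z hz'
      set w : ℝ := Φ l.prod z with hwdef
      have hzδ : |z - a| < δ₀ := by
        apply lt_of_lt_of_le hz
        apply div_le_self hδ₀.le
        exact one_le_pow₀ (by norm_num)
      have hwδ : |w - a| < δ₀ := by
        apply lt_of_le_of_lt ih2
        calc (2:ℝ) ^ l.length * |z - a| < 2 ^ l.length * (δ₀ / 2 ^ (l.length + 1)) := by
              apply mul_lt_mul_of_pos_left _ (by positivity)
              simpa using hz
        _ ≤ δ₀ := by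
              have hp : (0:ℝ) < 2 ^ l.length := by positivity
              rw [pow_succ, show (2:ℝ) ^ l.length * (δ₀ / (2 ^ l.length * 2)) = δ₀ / 2 by
                field_simp]
              linarith
      have hΦ : Φ (s :: l).prod z = Φ s w := by
        rw [List.prod_cons, hmul]; rfl
      have hest := genest s hs z w hzδ hwδ
      have hmz : m z ≤ |z - a| := hm_small z hzδ
      have h1 : |Φ s w - z| ≤ (2 ^ (l.length + 1) - 1) * m z := by
        have c1 : |Φ s w - Φ s z| ≤ 2 * |w - z| := by
          have := abs_sub_abs_le_abs_sub (Φ s w - Φ s z) (w - z)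
          calc |Φ s w - Φ s z| ≤ |Φ s w - Φ s z - (w - z)| + |w - z| := by
                have := abs_add_le (Φ s w - Φ s z - (w - z)) (w - z)
                simpa using this
          _ ≤ |w - z| + |w - z| := by linarith [hest]
          _ = 2 * |w - z| := by ring
        have c2 : |Φ s z - z| ≤ m z := hm_le s hs z
        calc |Φ s w - z| ≤ |Φ s z - z| + |Φ s w - Φ s z| := by
              have := abs_add_le (Φ s z - z) (Φ s w - Φ s z)
              calc |Φ s w - z| = |(Φ s z - z) + (Φ s w - Φ s z)| := by ring_nf
              _ ≤ |Φ s z - z| + |Φ s w - Φ s z| := this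
        _ ≤ m z + 2 * ((2 ^ l.length - 1) * m z) := by
              have := mul_le_mul_of_nonneg_left ih1 (by norm_num : (0:ℝ) ≤ 2)
              linarith [c1, c2]
        _ = (2 * 2 ^ l.length - 1) * m z := by ring
        _ = (2 ^ (l.length + 1) - 1) * m z := by rw [pow_succ]; ring
      constructor
      · rw [hΦ, List.length_cons]
        exact h1
      · rw [hΦ, List.length_cons]
        calc |Φ s w - a| ≤ |Φ s w - z| + |z - a| := by
              have := abs_add_le (Φ s w - z) (z - a)
              calc |Φ s w - a| = |(Φ s w - z) + (z - a)| := by ring_nf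
              _ ≤ |Φ s w - z| + |z - a| := this
        _ ≤ (2 ^ (l.length + 1) - 1) * m z + |z - a| := by linarith [h1]
        _ ≤ (2 ^ (l.length + 1) - 1) * |z - a| + |z - a| := by
              have h2 : (0:ℝ) ≤ 2 ^ (l.length + 1) - 1 := by
                have := one_le_pow₀ (show (1:ℝ) ≤ 2 by norm_num) (n := l.length + 1)
                linarith
              nlinarith [hmz, abs_nonneg (z - a)]
        _ = 2 ^ (l.length + 1) * |z - a| := by ring
  -- per-element bound
  have hCg : ∀ g : G, ∃ C : ℝ, 1 ≤ C ∧ ∃ δg > 0, ∀ z : ℝ, |z - a| < δg →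
      |Φ g z - z| ≤ C * m z ∧ |Φ g z - a| ≤ C * |z - a| := by
    intro g
    obtain ⟨l, hl, hlp⟩ := hword_exists g
    refine ⟨2 ^ l.length, one_le_pow₀ (by norm_num), δ₀ / 2 ^ l.length, by positivity,
      fun z hz => ?_⟩
    obtain ⟨h1, h2⟩ := hword l hl z hz
    rw [hlp] at h1 h2
    refine ⟨le_trans h1 ?_, h2⟩
    have := hm_nonneg z
    nlinarith
  -- near-additivity
  have hadd : ∀ g h : G, ∀ ε : ℝ, 0 < ε → ∃ δ' > 0, ∀ z : ℝ, |z - a| < δ' →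
      |(Φ (g * h) z - z) - (Φ g z - z) - (Φ h z - z)| ≤ ε * m z := by
    intro g h ε hε
    obtain ⟨Ch, hCh1, δh, hδh, hCh⟩ := hCg h
    obtain ⟨δg, hδg, hg⟩ := est g (ε / Ch) (by positivity)
    refine ⟨min δh (δg / Ch), by positivity, fun z hz => ?_⟩
    have hzh : |z - a| < δh := lt_of_lt_of_le hz (min_le_left _ _)
    have hzg' : |z - a| < δg / Ch := lt_of_lt_of_le hz (min_le_right _ _)
    have hzg : |z - a| < δg := lt_of_lt_of_le hzg' (div_le_self hδg.le hCh1)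
    obtain ⟨hw1, hw2⟩ := hCh z hzh
    set w : ℝ := Φ h z with hwdef
    have hwa : |w - a| < δg := by
      apply lt_of_le_of_lt hw2
      rw [lt_div_iff₀ (by positivity)] at hzg'
      calc Ch * |z - a| = |z - a| * Ch := by ring
      _ < δg := hzg'
    have hΦ : Φ (g * h) z = Φ g w := by rw [hmul]; rfl
    have key : |Φ g w - Φ g z - (w - z)| ≤ (ε / Ch) * |w - z| := hg z w hzg hwa
    have heq : (Φ (g * h) z - z) - (Φ g z - z) - (Φ h z - z) = Φ g w - Φ g z - (w - z) := by
      rw [hΦ, hwdef]; ring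
    rw [heq]
    calc |Φ g w - Φ g z - (w - z)| ≤ (ε / Ch) * |w - z| := key
    _ ≤ (ε / Ch) * (Ch * m z) := by
          apply mul_le_mul_of_nonneg_left _ (by positivity)
          exact hw1
    _ = ε * m z := by field_simp
  -- the sequence of moved points
  have hmove : ∀ z : ℝ, (∃ g, Φ g z ≠ z) → 0 < m z := by
    intro z hz
    rcases lt_or_eq_of_le (hm_nonneg z) with h | h
    · exact h
    · exfalso
      obtain ⟨g, hg⟩ := hz
      have hfixgen : ∀ s ∈ T', Φ s z = z := by
        intro s hs
        have := hm_le s hs z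
        rw [← h] at this
        have := le_antisymm this (abs_nonneg _)
        rwa [abs_eq_zero, sub_eq_zero] at this
      have : ∀ g : G, Φ g z = z := by
        intro g'
        have hsub : ∀ g₀ ∈ Subgroup.closure (T : Set G), Φ g₀ z = z := by
          intro g₀ hg₀
          induction hg₀ using Subgroup.closure_induction with
          | mem s hsmem =>
            exact hfixgen s (by simp [hT', Finset.mem_coe.1 hsmem])
          | one => rw [hone]; rfl
          | mul u v _ _ hu hv => rw [hmul]; show Φ u (Φ v z) = z; rw [hv, hu]
          | inv u _ hu =>
            have : Φ (u⁻¹ * u) z = z := by rw [inv_mul_cancel, hone]; rfl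
            rw [hmul] at this
            show Φ u⁻¹ z = z
            calc Φ u⁻¹ z = Φ u⁻¹ (Φ u z) := by rw [hu]
            _ = z := this
        exact hsub g' (by rw [hT]; trivial)
      exact hg (this g)
  have hseq : ∀ n : ℕ, ∃ z : ℝ, |z - a| < 1 / (n + 1) ∧ 0 < m z := by
    intro n
    obtain ⟨z, hz1, hz2⟩ := hne (1 / (n + 1)) (by positivity)
    exact ⟨z, hz1, hmove z hz2⟩
  choose xseq hx1 hx2 using hseq
  have hxa : ∀ δ : ℝ, 0 < δ → ∀ᶠ n in atTop, |xseq n - a| < δ := by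
    intro δ hδ
    obtain ⟨N, hN⟩ := exists_nat_gt (1 / δ)
    rw [eventually_atTop]
    refine ⟨N, fun n hn => ?_⟩
    refine lt_trans (hx1 n) ?_
    rw [div_lt_iff₀ (by positivity)]
    rw [div_lt_iff₀ hδ] at hN
    have : (N : ℝ) ≤ n := by exact_mod_cast hn
    nlinarith
  -- the normalized displacement sequence
  set v : G → ℕ → ℝ := fun g n => (Φ g (xseq n) - xseq n) / m (xseq n) with hv
  have hbound : ∀ g : G, ∃ C : ℝ, ∀ᶠ n in atTop, |v g n| ≤ C := by
    intro g
    obtain ⟨C, hC1', δg, hδg, hC⟩ := hCg g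
    refine ⟨C, (hxa δg hδg).mono fun n hn => ?_⟩
    have h1 := (hC (xseq n) hn).1
    rw [hv]
    simp only
    rw [abs_div, abs_of_pos (hx2 n), div_le_iff₀ (hx2 n)]
    calc |Φ g (xseq n) - xseq n| ≤ C * m (xseq n) := h1
    _ = C * m (xseq n) := rfl
  have hadd_tendsto : ∀ g h : G,
      Tendsto (fun n => v (g * h) n - v g n - v h n) atTop (nhds 0) := by
    intro g h
    rw [Metric.tendsto_atTop]
    intro ε hε
    obtain ⟨δ', hδ', hδe⟩ := hadd g h (ε / 2) (by positivity)
    obtain ⟨N, hN⟩ := eventually_atTop.1 (hxa δ' hδ')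
    refine ⟨N, fun n hn => ?_⟩
    have hmn := hx2 n
    have := hδe (xseq n) (hN n hn)
    rw [Real.dist_eq, sub_zero]
    have heq : v (g * h) n - v g n - v h n =
        ((Φ (g * h) (xseq n) - xseq n) - (Φ g (xseq n) - xseq n) - (Φ h (xseq n) - xseq n)) /
          m (xseq n) := by
      simp only [hv]
      rw [div_sub_div_same, div_sub_div_same]
    rw [heq, abs_div, abs_of_pos hmn]
    rw [div_lt_iff₀ hmn]
    calc |Φ (g * h) (xseq n) - xseq n - (Φ g (xseq n) - xseq n) - (Φ h (xseq n) - xseq n)|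
        ≤ ε / 2 * m (xseq n) := this
    _ < ε * m (xseq n) := by nlinarith
  -- pass to an ultrafilter limit
  let U : Ultrafilter ℕ := Ultrafilter.of atTop
  have hU : (U : Filter ℕ) ≤ atTop := Ultrafilter.of_le _
  have hφex : ∀ g : G, ∃ c : ℝ, Tendsto (v g) (U : Filter ℕ) (nhds c) := by
    intro g
    obtain ⟨C, hC⟩ := hbound g
    have hmem : Set.Icc (-C) C ∈ Ultrafilter.map (v g) U := by
      rw [Ultrafilter.mem_map]
      apply hU
      exact hC.mono fun n hn => Set.mem_Icc.2 (abs_le.1 hn)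
    obtain ⟨c, _, hc⟩ := (isCompact_Icc (a := -C) (b := C)).ultrafilter_le_nhds
      (Ultrafilter.map (v g) U) (le_principal_iff.2 hmem)
    exact ⟨c, hc⟩
  choose φ hφ using hφex
  have hφadd : ∀ g h : G, φ (g * h) = φ g + φ h := by
    intro g h
    have t1 : Tendsto (fun n => v (g * h) n - v g n - v h n) (U : Filter ℕ) (nhds 0) :=
      (hadd_tendsto g h).mono_left hU
    have t2 : Tendsto (fun n => (v (g * h) n - v g n - v h n) + v g n + v h n)
        (U : Filter ℕ) (nhds (0 + φ g + φ h)) := (t1.add (hφ g)).add (hφ h)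
    have t3 : Tendsto (v (g * h)) (U : Filter ℕ) (nhds (0 + φ g + φ h)) := by
      apply t2.congr
      intro n; ring
    have := tendsto_nhds_unique (hφ (g * h)) t3
    rw [this]; ring
  have hφone : φ 1 = 0 := by
    have t0 : Tendsto (v 1) (U : Filter ℕ) (nhds 0) := by
      have : v 1 = fun _ => 0 := by
        funext n; rw [hv]; simp [hone]
      rw [this]; exact tendsto_const_nhds
    exact tendsto_nhds_unique (hφ 1) t0
  -- nontriviality
  have hattain : ∀ n : ℕ, ∃ s ∈ T', |v s n| = 1 := by
    intro n
    obtain ⟨s, hs, hsup⟩ := Finset.exists_mem_eq_sup' hne' (fun s => |Φ s (xseq n) - xseq n|)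
    refine ⟨s, hs, ?_⟩
    rw [hv]
    simp only
    rw [abs_div, abs_of_pos (hx2 n), ← hsup]
    show m (xseq n) / m (xseq n) = 1
    exact div_self (hx2 n).ne'
  have hsmem : ∃ s ∈ T', {n : ℕ | |v s n| = 1} ∈ U := by
    have hcov : (⋃ s ∈ (T' : Set G), {n : ℕ | |v s n| = 1}) ∈ U := by
      have : (⋃ s ∈ (T' : Set G), {n : ℕ | |v s n| = 1}) = Set.univ := by
        rw [Set.eq_univ_iff_forall]
        intro n
        obtain ⟨s, hs, hsn⟩ := hattain n
        exact Set.mem_biUnion (Finset.mem_coe.2 hs) hsn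
      rw [this]; exact Filter.univ_mem
    rcases (Ultrafilter.finite_biUnion_mem_iff T'.finite_toSet).1 hcov with ⟨s, hs, hmem⟩
    exact ⟨s, Finset.mem_coe.1 hs, hmem⟩
  obtain ⟨s, hsT, hsmem'⟩ := hsmem
  have hφs : |φ s| = 1 := by
    have t1 : Tendsto (fun n => |v s n|) (U : Filter ℕ) (nhds |φ s|) := (hφ s).abs
    have t2 : Tendsto (fun n => |v s n|) (U : Filter ℕ) (nhds 1) := by
      apply Filter.Tendsto.congr' _ tendsto_const_nhds
      exact (Filter.eventually_iff.2 hsmem').mono fun n hn => hn.symm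
    exact tendsto_nhds_unique t1 t2
  refine ⟨{ toFun := fun g => Multiplicative.ofAdd (φ g),
            map_one' := by show Multiplicative.ofAdd (φ 1) = 1; rw [hφone]; rfl,
            map_mul' := fun g h => by
              show Multiplicative.ofAdd (φ (g * h)) =
                Multiplicative.ofAdd (φ g) * Multiplicative.ofAdd (φ h)
              rw [hφadd]; rfl }, ?_⟩
  intro hcontra
  have : Multiplicative.ofAdd (φ s) = 1 := by
    have := DFunLike.congr_fun hcontra s
    exact this
  have : φ s = 0 := by
    rwa [← ofAdd_zero, Multiplicative.ofAdd.apply_eq_iff_eq] at this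
  rw [this] at hφs
  simp at hφs
open Topology Filter in
lemma deriv_nonneg_of_strictMono {f : ℝ → ℝ} (hm : StrictMono f) {z : ℝ}
    (hd : DifferentiableAt ℝ f z) : 0 ≤ deriv f z := by
  have h := hd.hasDerivAt
  rw [hasDerivAt_iff_tendsto_slope] at h
  have h' : Tendsto (slope f z) (𝓝[>] z) (𝓝 (deriv f z)) :=
    h.mono_left (nhdsWithin_mono z (fun u hu => ne_of_gt hu))
  refine ge_of_tendsto h' ?_
  filter_upwards [self_mem_nhdsWithin] with u hu
  rw [slope_def_field]
  have h1 : z < u := hu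
  exact div_nonneg (sub_nonneg.2 (hm h1).le) (sub_nonneg.2 h1.le)

/-- If a finitely generated group `G` has an orientation preserving `C¹`
action on the circle with a global fixed point, and every group homomorphism
`G → (ℝ, +)` is trivial (i.e. `H¹(G, ℝ) = 0`), then `G` acts trivially. -/
theorem fixed_point_and_no_hom_implies_trivial
    (G : Type*) [Group G] [Group.FG G]
    (ρ : G →* Equiv.Perm 𝕊) (hρ : ∀ g : G, IsC1Diffeo (ρ g))
    (x : 𝕊) (hfix : ∀ g : G, ρ g x = x)
    (h1 : ∀ φ : G →* Multiplicative ℝ, φ = 1) :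
    ∀ (g : G) (y : 𝕊), ρ g y = y := by
  classical
  obtain ⟨xt, hxt⟩ : ∃ u : ℝ, (u : 𝕊) = x := QuotientAddGroup.mk_surjective x
  have hfixx : ∀ g : G, ρ g ((xt : ℝ) : 𝕊) = ((xt : ℝ) : 𝕊) := by
    intro g; rw [hxt]; exact hfix g
  choose Φ hΦ hΦfix using fun g : G => exists_normalized_lift (hρ g) (hfixx g)
  have hOP : ∀ g : G, IsOPLift (ρ g) (Φ g) := fun g => (hΦ g).1
  have hC1' : ∀ g : G, ContDiff ℝ 1 (Φ g) := fun g => (hΦ g).2.1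
  have hD0 : ∀ (g : G) (z : ℝ), deriv (Φ g) z ≠ 0 := fun g => (hΦ g).2.2
  have hdiff : ∀ (g : G) (z : ℝ), DifferentiableAt ℝ (Φ g) z :=
    fun g z => ((hΦ g).2.1.differentiable one_ne_zero) z
  have hmul : ∀ g h : G, Φ (g * h) = Φ g ∘ Φ h := by
    intro g h
    have hcomp : IsOPLift (ρ (g * h)) (Φ g ∘ Φ h) := by
      rw [map_mul]; exact isOPLift_comp (hOP g) (hOP h)
    apply lift_eq_of_agree (hOP (g * h)) hcomp (c := xt)
    show Φ (g * h) xt = (Φ g ∘ Φ h) xt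
    show Φ (g * h) xt = Φ g (Φ h xt)
    rw [hΦfix, hΦfix, hΦfix]
  have hone : Φ 1 = id := by
    have hid : IsOPLift (ρ (1 : G)) (id : ℝ → ℝ) := by rw [map_one]; exact isOPLift_id
    exact lift_eq_of_agree (hOP 1) hid (c := xt) (by rw [hΦfix]; rfl)
  have hchain : ∀ a : ℝ, (∀ g : G, Φ g a = a) → ∀ g h : G,
      deriv (Φ (g * h)) a = deriv (Φ g) a * deriv (Φ h) a := by
    intro a ha g h
    rw [hmul, deriv_comp a (hdiff g (Φ h a)) (hdiff h a), ha h]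
  have hderiv1 : ∀ a : ℝ, (∀ g : G, Φ g a = a) → ∀ g : G, deriv (Φ g) a = 1 := by
    intro a ha
    set ψ : G →* Multiplicative ℝ :=
      { toFun := fun g => Multiplicative.ofAdd (Real.log (deriv (Φ g) a)),
        map_one' := by
          show Multiplicative.ofAdd (Real.log (deriv (Φ (1 : G)) a)) = 1
          rw [hone]
          norm_num
        map_mul' := fun g h => by
          show Multiplicative.ofAdd (Real.log (deriv (Φ (g * h)) a)) =
            Multiplicative.ofAdd (Real.log (deriv (Φ g) a)) *
              Multiplicative.ofAdd (Real.log (deriv (Φ h) a))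
          rw [hchain a ha g h, Real.log_mul (hD0 g a) (hD0 h a)]
          rfl } with hψdef
    intro g
    have hg1 : ψ g = 1 := by rw [h1 ψ]; rfl
    have hlog : Real.log (deriv (Φ g) a) = 0 := by
      have : Multiplicative.ofAdd (Real.log (deriv (Φ g) a)) = 1 := hg1
      exact ofAdd_eq_one.1 this
    rcases Real.log_eq_zero.1 hlog with h | h | h
    · exact absurd h (hD0 g a)
    · exact h
    · exfalso
      have := deriv_nonneg_of_strictMono (hOP g).2.1 (hdiff g a)
      rw [h] at this
      linarith
  set K : Set ℝ := {u | ∀ g : G, Φ g u = u} with hK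
  have hproj : ∀ (g : G) (u : ℝ), ρ g (u : 𝕊) = ((Φ g u : ℝ) : 𝕊) :=
    fun g u => (hOP g).2.2.2 u
  suffices hKall : ∀ u : ℝ, u ∈ K by
    intro g y
    obtain ⟨u, hu⟩ := QuotientAddGroup.mk_surjective y
    rw [← hu]
    show ρ g (u : 𝕊) = (u : 𝕊)
    rw [hproj g u, hKall u g]
  by_contra hcon
  push_neg at hcon
  obtain ⟨t, ht⟩ := hcon
  have hxtK : xt ∈ K := fun g => hΦfix g
  have hKclosed : IsClosed K := by
    have hKi : K = ⋂ g : G, {u : ℝ | Φ g u = u} := by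
      ext u; simp [hK, Set.mem_iInter]
    rw [hKi]
    exact isClosed_iInter fun g => isClosed_eq (hOP g).1 continuous_id
  have hup : ∀ (g : G) (n : ℕ) (u : ℝ), Φ g (u + n) = Φ g u + n := by
    intro g n
    induction n with
    | zero => simp
    | succ k ih =>
      intro u
      have hc : ((k + 1 : ℕ) : ℝ) = (k : ℝ) + 1 := by push_cast; ring
      rw [hc, ← add_assoc, (hOP g).2.2.1 (u + (k : ℝ)), ih u]
      ring
  have hdown : ∀ (g : G) (n : ℕ) (u : ℝ), Φ g (u - n) = Φ g u - n := by
    intro g n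
    induction n with
    | zero => simp
    | succ k ih =>
      intro u
      have hc : ((k + 1 : ℕ) : ℝ) = (k : ℝ) + 1 := by push_cast; ring
      rw [hc]
      have h1' := (hOP g).2.2.1 (u - ((k : ℝ) + 1))
      rw [show u - ((k : ℝ) + 1) + 1 = u - (k : ℝ) by ring] at h1'
      have h2' := ih u
      linarith
  have hKadd : ∀ u ∈ K, ∀ n : ℤ, u + (n : ℝ) ∈ K := by
    intro u hu n
    obtain ⟨k, rfl | rfl⟩ := n.eq_nat_or_neg
    · intro g
      push_cast
      rw [hup g k u, hu g]
    · intro g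
      push_cast
      rw [show u + -(k : ℝ) = u - (k : ℝ) by ring, hdown g k u, hu g]
  set A : Set ℝ := K ∩ Set.Iic t with hA
  have hAne : A.Nonempty := by
    refine ⟨xt + (⌊t - xt⌋ : ℝ), hKadd xt hxtK _, ?_⟩
    have := Int.floor_le (t - xt)
    simp only [Set.mem_Iic]
    linarith
  have hAbdd : BddAbove A := ⟨t, fun u hu => hu.2⟩
  have hAclosed : IsClosed A := hKclosed.inter isClosed_Iic
  set a := sSup A with ha
  have haA : a ∈ A := hAclosed.csSup_mem hAne hAbdd
  have haK : a ∈ K := haA.1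
  have hat : a < t := lt_of_le_of_ne haA.2 (fun h => ht (h ▸ haK))
  have hgap : ∀ u, a < u → u ≤ t → u ∉ K := fun u h1' h2' hu =>
    absurd (le_csSup hAbdd ⟨hu, h2'⟩) (not_le.2 h1')
  obtain ⟨S, hS, hSfin⟩ := Group.fg_iff.1 (inferInstance : Group.FG G)
  have hda : ∀ g : G, deriv (Φ g) a = 1 := hderiv1 a haK
  have hnear : ∀ δ > 0, ∃ z : ℝ, |z - a| < δ ∧ ∃ g, Φ g z ≠ z := by
    intro δ hδ
    have hmin : 0 < min (δ / 2) (t - a) := lt_min (by linarith) (by linarith)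
    refine ⟨a + min (δ / 2) (t - a), ?_, ?_⟩
    · rw [add_sub_cancel_left, abs_of_pos hmin]
      have := min_le_left (δ / 2) (t - a)
      linarith
    · have h1' : a < a + min (δ / 2) (t - a) := by linarith
      have h2' : a + min (δ / 2) (t - a) ≤ t := by
        have := min_le_right (δ / 2) (t - a)
        linarith
      have hnk := hgap _ h1' h2'
      rw [hK] at hnk
      exact not_forall.1 hnk
  obtain ⟨ψ, hψ⟩ := thurston_core hSfin.toFinset (by rwa [Set.Finite.coe_toFinset]) Φ hmul
    hone hC1' a (fun g => haK g) hda hnear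
  exact hψ (h1 ψ)
end
end

section
/- Let G be a group of orientation preserving homeomorphisms of the circle and let μ be a G-invariant Borel probability measure on the circle. Then the mean rotation number map ρ : G → ℝ/ℤ, defined by ρ(g) = ∫ (g̃(x) − x) dμ̃(x) (mod 1), where g̃ : ℝ → ℝ is a lift of g commuting with the translation x ↦ x+1, μ̃ is the lift of μ to ℝ, and the integral is taken over a single fundamental domain, is a well-defined group homomorphism (independent of the choice of lift g̃). -/
noncomputable section

open MeasureTheory

/-- The mean rotation number of the lift `F` with respect to the measure `μ` on the
circle: the integral of `F x - x` over a fundamental domain `[0,1)` against the lift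
`μ̃` of `μ` (computed as the integral over the circle of the function induced by the
periodic function `x ↦ F x - x`), reduced mod 1. -/
def meanRot (μ : Measure 𝕊) (F : ℝ → ℝ) : 𝕊 :=
  ((∫ y, (AddCircle.liftIco 1 0 fun x => F x - x) y ∂μ : ℝ) : 𝕊)

lemma coe_int_zero (n : ℤ) : ((n : ℝ) : 𝕊) = 0 := by
  rw [QuotientAddGroup.eq_zero_iff]
  exact ⟨n, by simp⟩

lemma coe_fract (x : ℝ) : ((x : ℝ) : 𝕊) = ((Int.fract x : ℝ) : 𝕊) := by
  rw [Int.fract, QuotientAddGroup.mk_sub, coe_int_zero, sub_zero]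

lemma lift_per {ψ : ℝ → ℝ} (hψ : Function.Periodic ψ 1) (x : ℝ) :
    AddCircle.liftIco 1 0 ψ (x : 𝕊) = ψ x := by
  have hx : Int.fract x ∈ Set.Ico (0:ℝ) (0+1) := by
    simp [Int.fract_nonneg, Int.fract_lt_one]
  rw [coe_fract, AddCircle.liftIco_coe_apply hx]
  have h := hψ.sub_int_mul_eq (x := x) ⌊x⌋
  rw [Int.fract]
  simpa using h

lemma per_sub {F : ℝ → ℝ} (hF : ∀ x, F (x+1) = F x + 1) :
    Function.Periodic (fun x => F x - x) 1 := fun x => by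
  simp only [hF x]; ring

lemma cont_lift {F : ℝ → ℝ} (hc : Continuous F) (hF : ∀ x, F (x+1) = F x + 1) :
    Continuous (AddCircle.liftIco 1 0 fun x => F x - x) := by
  apply AddCircle.liftIco_continuous
  · have := hF 0; simp only [zero_add] at this ⊢; rw [this]; ring
  · exact (hc.sub continuous_id).continuousOn

lemma int_lift (μ : Measure 𝕊) [IsProbabilityMeasure μ] {F : ℝ → ℝ}
    (hc : Continuous F) (hF : ∀ x, F (x+1) = F x + 1) :
    Integrable (AddCircle.liftIco 1 0 fun x => F x - x) μ :=
  (cont_lift hc hF).integrable_of_hasCompactSupport (HasCompactSupport.of_compactSpace _)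

lemma half_not_int (a k : ℤ) : (k : ℝ) ≠ (a : ℝ) + 1/2 := by
  intro h
  have h2 : ((2*k : ℤ) : ℝ) = ((2*a+1 : ℤ) : ℝ) := by push_cast; linarith
  have := Int.cast_injective (α := ℝ) h2
  omega

lemma lift_diff {f : Equiv.Perm 𝕊} {F F' : ℝ → ℝ} (hF : IsOPLift f F) (hF' : IsOPLift f F') :
    ∃ n : ℤ, ∀ x, F' x = F x + n := by
  obtain ⟨hc, -, -, hp⟩ := hF
  obtain ⟨hc', -, -, hp'⟩ := hF'
  have hint : ∀ x, ∃ n : ℤ, F' x - F x = n := by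
    intro x
    have h : ((F x : ℝ) : 𝕊) = F' x := by rw [← hp x, ← hp' x]
    rw [QuotientAddGroup.eq_iff_sub_mem] at h
    obtain ⟨n, hn⟩ := h
    refine ⟨-n, ?_⟩
    simp only [zsmul_eq_mul, mul_one] at hn
    push_cast
    linarith
  set h := fun x => F' x - F x with hh
  have hch : Continuous h := hc'.sub hc
  have key : ∀ x, h x = h 0 := by
    intro x
    by_contra hne
    obtain ⟨n0, hn0⟩ := hint 0
    obtain ⟨nx, hnx⟩ := hint x
    have hne' : n0 ≠ nx := by
      rintro rfl
      exact hne (by rw [hh]; simp only; rw [hnx, hn0])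
    have main : ∀ a b : ℤ, a < b → ((a:ℝ) + 1/2) ∈ Set.uIcc (h 0) (h x) → False := by
      intro a b _ hmem
      obtain ⟨c, -, hc2⟩ := intermediate_value_uIcc hch.continuousOn hmem
      obtain ⟨k, hk⟩ := hint c
      exact half_not_int a k (by rw [← hk]; exact hc2)
    rcases lt_or_gt_of_ne hne' with hlt | hlt
    · refine main n0 nx hlt ?_
      have : (n0:ℝ) + 1 ≤ nx := by exact_mod_cast hlt
      rw [Set.mem_uIcc]
      left
      constructor
      · rw [hh]; simp only; rw [hn0]; linarith
      · rw [hh]; simp only; rw [hnx]; linarith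
    · refine main nx n0 hlt ?_
      have : (nx:ℝ) + 1 ≤ n0 := by exact_mod_cast hlt
      rw [Set.mem_uIcc]
      right
      constructor
      · rw [hh]; simp only; rw [hnx]; linarith
      · rw [hh]; simp only; rw [hn0]; linarith
  obtain ⟨n0, hn0⟩ := hint 0
  refine ⟨n0, fun x => ?_⟩
  have := key x
  rw [hh] at this
  simp only at this
  rw [← hn0]
  linarith [this]

lemma meanRot_shift (μ : Measure 𝕊) [IsProbabilityMeasure μ] {F : ℝ → ℝ}
    (hc : Continuous F) (hF : ∀ x, F (x+1) = F x + 1) (n : ℤ) :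
    meanRot μ (fun x => F x + n) = meanRot μ F := by
  have hper := per_sub hF
  have hF' : ∀ x, F (x+1) + (n:ℝ) = (F x + n) + 1 := fun x => by rw [hF]; ring
  have hper' : Function.Periodic (fun x => (F x + n) - x) 1 :=
    per_sub (F := fun x => F x + n) (fun x => hF' x)
  have hpt : ∀ y : 𝕊, AddCircle.liftIco 1 0 (fun x => (F x + n) - x) y
      = AddCircle.liftIco 1 0 (fun x => F x - x) y + n := by
    intro y
    induction y using QuotientAddGroup.induction_on with
    | H x => rw [lift_per hper' x, lift_per hper x]; ring
  unfold meanRot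
  rw [integral_congr_ae (Filter.Eventually.of_forall hpt),
    integral_add (int_lift μ hc hF) (integrable_const _), integral_const]
  simp only [measure_univ, ENNReal.toReal_one, one_smul, probReal_univ]
  rw [QuotientAddGroup.mk_add, coe_int_zero, add_zero]

/-- Let `G` be a group of orientation preserving homeomorphisms of the
circle and let `μ` be a `G`-invariant Borel probability measure on the circle.  Then the
mean rotation number map `ρ : G → ℝ/ℤ`, `ρ(g) = ∫ (g̃(x) - x) dμ̃(x) (mod 1)`, is
well defined (independent of the choice of lift `g̃`) and is a group homomorphism. -/
theorem meanRot_well_defined_and_hom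
    (G : Subgroup (Equiv.Perm 𝕊)) (hop : ∀ f ∈ G, IsOPHomeo f)
    (μ : Measure 𝕊) [IsProbabilityMeasure μ]
    (hinv : ∀ f ∈ G, Measure.map f μ = μ) :
    (∀ f ∈ G, ∀ F F' : ℝ → ℝ, IsOPLift f F → IsOPLift f F' →
        meanRot μ F = meanRot μ F') ∧
      (∀ f ∈ G, ∀ g ∈ G, ∀ Ff Fg Ffg : ℝ → ℝ,
        IsOPLift f Ff → IsOPLift g Fg → IsOPLift (f * g) Ffg →
          meanRot μ Ffg = meanRot μ Ff + meanRot μ Fg) := by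
  have wd : ∀ f : Equiv.Perm 𝕊, ∀ F F' : ℝ → ℝ, IsOPLift f F → IsOPLift f F' →
      meanRot μ F = meanRot μ F' := by
    intro f F F' hF hF'
    obtain ⟨n, hn⟩ := lift_diff hF hF'
    have hFe : F' = fun x => F x + (n:ℝ) := funext hn
    rw [hFe, meanRot_shift μ hF.1 hF.2.2.1 n]
  refine ⟨fun f _ => wd f, ?_⟩
  intro f hf g hg Ff Fg Ffg hFf hFg hFfg
  have hcomp : IsOPLift (f * g) (Ff ∘ Fg) := by
    refine ⟨hFf.1.comp hFg.1, hFf.2.1.comp hFg.2.1, fun x => ?_, fun x => ?_⟩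
    · simp only [Function.comp_apply, hFg.2.2.1, hFf.2.2.1]
    · rw [Equiv.Perm.mul_apply, hFg.2.2.2, hFf.2.2.2]; rfl
  rw [wd (f*g) Ffg (Ff ∘ Fg) hFfg hcomp]
  have hq : Topology.IsQuotientMap ((↑) : ℝ → 𝕊) := isQuotientMap_quot_mk
  have hgc : Continuous (⇑g) := by
    rw [hq.continuous_iff]
    have he : (⇑g ∘ ((↑) : ℝ → 𝕊)) = fun x : ℝ => ((Fg x : ℝ) : 𝕊) :=
      funext fun x => hFg.2.2.2 x
    rw [he]
    exact hq.continuous.comp hFg.1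
  have hpt : ∀ y : 𝕊, AddCircle.liftIco 1 0 (fun x => (Ff ∘ Fg) x - x) y
      = (AddCircle.liftIco 1 0 fun x => Ff x - x) (g y)
        + (AddCircle.liftIco 1 0 fun x => Fg x - x) y := by
    intro y
    induction y using QuotientAddGroup.induction_on with
    | H x =>
      rw [lift_per (per_sub hcomp.2.2.1) x, hFg.2.2.2 x,
        lift_per (per_sub hFf.2.2.1) (Fg x), lift_per (per_sub hFg.2.2.1) x]
      simp only [Function.comp_apply]
      ring
  have hif : Integrable (AddCircle.liftIco 1 0 fun x => Ff x - x) μ :=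
    int_lift μ hFf.1 hFf.2.2.1
  have hig : Integrable (AddCircle.liftIco 1 0 fun x => Fg x - x) μ :=
    int_lift μ hFg.1 hFg.2.2.1
  have hifg : Integrable (fun y => (AddCircle.liftIco 1 0 fun x => Ff x - x) (g y)) μ :=
    (((cont_lift hFf.1 hFf.2.2.1).comp hgc).integrable_of_hasCompactSupport
      (HasCompactSupport.of_compactSpace _))
  have hmap : ∫ y, (AddCircle.liftIco 1 0 fun x => Ff x - x) (g y) ∂μ
      = ∫ y, (AddCircle.liftIco 1 0 fun x => Ff x - x) y ∂μ := by
    conv_rhs => rw [← hinv g hg]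
    rw [integral_map hgc.aemeasurable (cont_lift hFf.1 hFf.2.2.1).aestronglyMeasurable]
  unfold meanRot
  rw [integral_congr_ae (Filter.Eventually.of_forall hpt), integral_add hifg hig, hmap,
    QuotientAddGroup.mk_add]
end
end

section
/- Let g be an orientation preserving homeomorphism of the circle preserving a Borel probability measure μ (g_*μ = μ). If g has at least one fixed point, then the (topological) support of μ is contained in the fixed point set of g. -/
noncomputable section

open MeasureTheory

/-- The topological support of a measure `μ` on the circle: the set of points all of whose
neighbourhoods have positive measure (equivalently, the smallest closed set of full
measure). -/
def msupport (μ : Measure 𝕊) : Set 𝕊 := {x : 𝕊 | ∀ U ∈ nhds x, 0 < μ U}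

open Set Filter Function

private lemma lift_add_nat {F : ℝ → ℝ} (hper : ∀ x, F (x + 1) = F x + 1) (x : ℝ) (n : ℕ) :
    F (x + n) = F x + n := by
  induction n with
  | zero => simp
  | succ n ih =>
    push_cast
    rw [← add_assoc, hper, ih]
    ring

private lemma op_surj {F : ℝ → ℝ} (hc : Continuous F) (hm : StrictMono F)
    (hper : ∀ x, F (x + 1) = F x + 1) : Function.Surjective F := by
  apply hc.surjective
  · apply tendsto_atTop_atTop_of_monotone hm.monotone
    intro b
    obtain ⟨n, hn⟩ := exists_nat_ge (b - F 0)
    refine ⟨0 + n, ?_⟩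
    rw [lift_add_nat hper]
    linarith
  · apply tendsto_atBot_atBot_of_monotone hm.monotone
    intro b
    obtain ⟨n, hn⟩ := exists_nat_ge (F 0 - b)
    refine ⟨-n, ?_⟩
    have h1 : F (-(n : ℝ) + n) = F (-(n : ℝ)) + n := lift_add_nat hper _ n
    simp only [neg_add_cancel] at h1
    linarith

private lemma continuous_of_lift {g : Equiv.Perm 𝕊} {F : ℝ → ℝ} (hF : IsOPLift g F) :
    Continuous g := by
  rw [(QuotientAddGroup.isQuotientMap_mk (AddSubgroup.zmultiples (1:ℝ))).continuous_iff]
  have : (⇑g ∘ (QuotientAddGroup.mk : ℝ → 𝕊)) = fun x : ℝ => ((F x : 𝕊)) := by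
    funext x
    exact hF.2.2.2 x
  rw [this]
  exact QuotientAddGroup.continuous_mk.comp hF.1

private lemma map_symm_eq {g : Equiv.Perm 𝕊} (hg : Continuous g) (hg' : Continuous g.symm)
    (μ : Measure 𝕊) (hinv : Measure.map g μ = μ) : Measure.map g.symm μ = μ := by
  conv_lhs => rw [← hinv]
  rw [Measure.map_map hg'.measurable hg.measurable]
  have : (⇑g.symm ∘ ⇑g) = id := by
    funext x; simp
  rw [this, Measure.map_id]

private lemma meas_image_eq {g : Equiv.Perm 𝕊} (hg : Continuous g) (hg' : Continuous g.symm)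
    (μ : Measure 𝕊) (hinv : Measure.map g μ = μ) {A : Set 𝕊} (hA : MeasurableSet A) :
    μ (⇑g '' A) = μ A := by
  rw [Equiv.image_eq_preimage_symm]
  rw [← Measure.map_apply hg'.measurable hA, map_symm_eq hg hg' μ hinv]

/-- Key lemma: with a fixed lift fixed point `t₀` and `s` strictly inside the fundamental
domain moved forward by `F`, the open interval `(G s, F s)` has measure zero. -/
private lemma key_lemma (g : Equiv.Perm 𝕊) (F G : ℝ → ℝ)
    (hF : IsOPLift g F) (hG : IsOPLift g.symm G)
    (hGF : ∀ x, G (F x) = x) (hFG : ∀ x, F (G x) = x)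
    (μ : Measure 𝕊) [IsProbabilityMeasure μ]
    (hinv : Measure.map g μ = μ)
    (t₀ s : ℝ) (h0 : F t₀ = t₀) (hs : s ∈ Set.Ioo t₀ (t₀ + 1)) (hFs : s < F s) :
    μ (((↑) : ℝ → 𝕊) '' Set.Ioo (G s) (F s)) = 0 := by
  haveI : Fact ((0 : ℝ) < 1) := ⟨one_pos⟩
  obtain ⟨hFc, hFm, hFper, hFproj⟩ := hF
  obtain ⟨hGc, hGm, hGper, hGproj⟩ := hG
  have hgc : Continuous g := continuous_of_lift ⟨hFc, hFm, hFper, hFproj⟩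
  have hgc' : Continuous g.symm := continuous_of_lift ⟨hGc, hGm, hGper, hGproj⟩
  have hG0 : G t₀ = t₀ := by conv_lhs => rw [← h0, hGF]
  have hF1 : F (t₀ + 1) = t₀ + 1 := by rw [hFper, h0]
  have hG1 : G (t₀ + 1) = t₀ + 1 := by conv_lhs => rw [← hF1, hGF]
  -- the orbit
  set a : ℕ → ℝ := fun n => F^[n] (G s) with ha_def
  have ha_succ : ∀ n, a (n + 1) = F (a n) := fun n => Function.iterate_succ_apply' F n _
  have ha0 : a 0 = G s := rfl
  have ha1 : a 1 = s := by rw [ha_succ, ha0, hFG]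
  have ha2 : a 2 = F s := by rw [ha_succ, ha1]
  have hstep : ∀ n, a n < a (n + 1) := by
    intro n
    induction n with
    | zero =>
      rw [ha0, ha1]
      have : G s < G (F s) := hGm hFs
      rwa [hGF] at this
    | succ n ih =>
      have := hFm ih
      rwa [← ha_succ n, ← ha_succ (n+1)] at this
  have hamono : StrictMono a := strictMono_nat_of_lt_succ hstep
  have haIoo : ∀ n, a n ∈ Set.Ioo t₀ (t₀ + 1) := by
    intro n
    induction n with
    | zero =>
      rw [ha0]
      constructor
      · rw [← hG0]; exact hGm hs.1
      · rw [← hG1]; exact hGm hs.2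
    | succ n ih =>
      rw [ha_succ]
      constructor
      · rw [← h0]; exact hFm ih.1
      · rw [← hF1]; exact hFm ih.2
  -- image of intervals
  have himg : ∀ u v : ℝ, ⇑g '' (((↑) : ℝ → 𝕊) '' Set.Ioo u v)
      = ((↑) : ℝ → 𝕊) '' Set.Ioo (F u) (F v) := by
    intro u v
    rw [Set.image_image]
    have h1 : F '' Set.Ioo u v = Set.Ioo (F u) (F v) := by
      ext y
      constructor
      · rintro ⟨x, hx, rfl⟩
        exact ⟨hFm hx.1, hFm hx.2⟩
      · rintro ⟨h1, h2⟩
        refine ⟨G y, ⟨?_, ?_⟩, hFG y⟩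
        · have : G (F u) < G y := hGm h1
          rwa [hGF] at this
        · have : G y < G (F v) := hGm h2
          rwa [hGF] at this
    rw [← h1, Set.image_image]
    exact Set.image_congr fun x _ => hFproj x
  -- the disjoint sets
  set A : ℕ → Set 𝕊 := fun n => ((↑) : ℝ → 𝕊) '' Set.Ioo (a (2*n)) (a (2*n+2)) with hA_def
  have hAopen : ∀ n, IsOpen (A n) := fun n =>
    QuotientAddGroup.isOpenMap_coe _ isOpen_Ioo
  have hAmeas : ∀ n, MeasurableSet (A n) := fun n => (hAopen n).measurableSet
  have hAeq : ∀ n, μ (A (n+1)) = μ (A n) := by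
    intro n
    have h1 : ⇑g '' A n = ((↑) : ℝ → 𝕊) '' Set.Ioo (a (2*n+1)) (a (2*n+3)) := by
      rw [hA_def]
      simp only
      rw [himg, ← ha_succ, ← ha_succ]
    have h2 : ⇑g '' (⇑g '' A n) = A (n+1) := by
      rw [h1, himg, ← ha_succ, ← ha_succ, hA_def]
      have e1 : 2*n+1+1 = 2*(n+1) := by ring
      have e2 : 2*n+3+1 = 2*(n+1)+2 := by ring
      rw [e1, e2]
    rw [← h2]
    rw [meas_image_eq hgc hgc' μ hinv, meas_image_eq hgc hgc' μ hinv (hAmeas n)]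
    rw [h1]
    exact (QuotientAddGroup.isOpenMap_coe _ isOpen_Ioo).measurableSet
  have hAconst : ∀ n, μ (A n) = μ (A 0) := by
    intro n
    induction n with
    | zero => rfl
    | succ n ih => rw [hAeq, ih]
  -- disjointness
  have hdisj : Pairwise (Function.onFun Disjoint A) := by
    have hIco : ∀ n, ∀ x ∈ Set.Ioo (a (2*n)) (a (2*n+2)), x ∈ Set.Ico t₀ (t₀ + 1) := by
      intro n x hx
      exact ⟨((haIoo (2*n)).1.trans hx.1).le, hx.2.trans (haIoo (2*n+2)).2⟩
    intro m n hmn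
    apply Set.disjoint_image_image
    intro x hx y hy hxy
    have hxI := hIco m x hx
    have hyI := hIco n y hy
    rw [AddCircle.coe_eq_coe_iff_of_mem_Ico hxI hyI] at hxy
    rcases hmn.lt_or_gt with h | h
    · have : a (2*m+2) ≤ a (2*n) := hamono.monotone (by omega)
      exact absurd hxy (by subst hxy; linarith [hx.2, hy.1])
    · have : a (2*n+2) ≤ a (2*m) := hamono.monotone (by omega)
      exact absurd hxy (by subst hxy; linarith [hx.1, hy.2])
  -- summation
  have hsum : μ (⋃ n, A n) = ∑' n, μ (A n) := measure_iUnion hdisj hAmeas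
  by_contra hne
  have hpos : μ (A 0) ≠ 0 := by
    rw [hA_def]; simpa [ha0, ha2] using hne
  have htop : (∑' _ : ℕ, μ (A 0)) = ⊤ := ENNReal.tsum_const_eq_top_of_ne_zero hpos
  have : μ (⋃ n, A n) = ⊤ := by
    rw [hsum]
    rw [tsum_congr hAconst]
    exact htop
  exact (measure_ne_top μ _) this

/-- Let `g` be an orientation preserving homeomorphism of the circle
preserving a Borel probability measure `μ`.  If `g` has at least one fixed point, then the
support of `μ` is contained in the fixed point set of `g`. -/
theorem support_subset_fixedPoints
    (g : Equiv.Perm 𝕊) (hg : IsOPHomeo g)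
    (μ : Measure 𝕊) [IsProbabilityMeasure μ]
    (hinv : Measure.map g μ = μ)
    (hfix : ∃ x : 𝕊, g x = x) :
    msupport μ ⊆ {x : 𝕊 | g x = x} := by
  haveI : Fact ((0 : ℝ) < 1) := ⟨one_pos⟩
  obtain ⟨F₀, hF₀c, hF₀m, hF₀per, hF₀proj⟩ := hg
  obtain ⟨x₀, hx₀⟩ := hfix
  obtain ⟨t₀, ht₀⟩ := QuotientAddGroup.mk_surjective x₀
  -- normalize the lift so that `F t₀ = t₀`
  have hcoe : ((F₀ t₀ : ℝ) : 𝕊) = (t₀ : 𝕊) := by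
    rw [← hF₀proj, ht₀, hx₀]
  have : ((F₀ t₀ - t₀ : ℝ) : 𝕊) = 0 := by
    rw [AddCircle.coe_sub, hcoe, sub_self]
  obtain ⟨k, hk⟩ := (AddCircle.coe_eq_zero_iff _).mp this
  have hk' : F₀ t₀ = t₀ + k := by
    have : (k : ℝ) = F₀ t₀ - t₀ := by rw [← hk]; simp
    linarith
  set F : ℝ → ℝ := fun x => F₀ x - k with hF_def
  have hFc : Continuous F := hF₀c.sub continuous_const
  have hFm : StrictMono F := fun x y h => by simp only [hF_def]; linarith [hF₀m h]
  have hFper : ∀ x, F (x + 1) = F x + 1 := fun x => by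
    simp only [hF_def, hF₀per]; ring
  have hcast : ∀ y : ℝ, ((y - (k:ℝ) : ℝ) : 𝕊) = (y : 𝕊) := by
    intro y
    have : (((k:ℝ)) : 𝕊) = 0 := (AddCircle.coe_eq_zero_iff _).mpr ⟨k, by simp⟩
    rw [AddCircle.coe_sub, this, sub_zero]
  have hFproj : ∀ x : ℝ, g (x : 𝕊) = (F x : 𝕊) := fun x => by
    rw [hF_def]; simp only; rw [hcast, hF₀proj]
  have hF : IsOPLift g F := ⟨hFc, hFm, hFper, hFproj⟩
  have h0 : F t₀ = t₀ := by simp only [hF_def]; rw [hk']; ring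
  -- the inverse lift
  have hFsurj : Function.Surjective F := op_surj hFc hFm hFper
  set Fiso : ℝ ≃o ℝ := StrictMono.orderIsoOfSurjective F hFm hFsurj with hFiso_def
  set G : ℝ → ℝ := ⇑Fiso.symm with hG_def
  have hGF : ∀ x, G (F x) = x := fun x =>
    StrictMono.orderIsoOfSurjective_symm_apply_self F hFm hFsurj x
  have hFG : ∀ x, F (G x) = x := fun x => by
    have h1 : ⇑Fiso = F := StrictMono.coe_orderIsoOfSurjective F hFm hFsurj
    have := Fiso.apply_symm_apply x
    rw [h1] at this
    exact this
  have hGc : Continuous G := Fiso.symm.continuous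
  have hGm : StrictMono G := Fiso.symm.strictMono
  have hGper : ∀ x, G (x + 1) = G x + 1 := by
    intro x
    apply hFm.injective
    rw [hFG, hFper, hFG]
  have hGproj : ∀ x : ℝ, g.symm (x : 𝕊) = (G x : 𝕊) := by
    intro x
    rw [Equiv.symm_apply_eq, hFproj, hFG]
  have hG : IsOPLift g.symm G := ⟨hGc, hGm, hGper, hGproj⟩
  have hG0 : G t₀ = t₀ := by conv_lhs => rw [← h0, hGF]
  -- main argument
  intro x hx
  by_contra hgx
  simp only [Set.mem_setOf_eq] at hgx
  -- choose the representative of x in [t₀, t₀+1)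
  set s : ℝ := ((AddCircle.equivIco 1 t₀ x : Set.Ico t₀ (t₀ + 1)) : ℝ) with hs_def
  have hsIco : s ∈ Set.Ico t₀ (t₀ + 1) := (AddCircle.equivIco 1 t₀ x).2
  have hsx : (s : 𝕊) = x := by
    exact (AddCircle.equivIco 1 t₀).symm_apply_apply x
  have hst₀ : s ≠ t₀ := by
    intro h
    apply hgx
    rw [← hsx, h, ht₀]; exact hx₀
  have hsIoo : s ∈ Set.Ioo t₀ (t₀ + 1) := ⟨lt_of_le_of_ne hsIco.1 (Ne.symm hst₀), hsIco.2⟩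
  have hFs_ne : F s ≠ s := by
    intro h
    apply hgx
    rw [← hsx, hFproj, h]
  rcases hFs_ne.lt_or_gt with hlt | hgt
  · -- F s < s, use g.symm : then s < G s
    have hsG : s < G s := by
      have : G (F s) < G s := hGm hlt
      rwa [hGF] at this
    have hinv' : Measure.map g.symm μ = μ :=
      map_symm_eq (continuous_of_lift hF) (continuous_of_lift hG) μ hinv
    have hF' : IsOPLift g.symm.symm F := by rw [Equiv.symm_symm]; exact hF
    have h0' : G t₀ = t₀ := hG0
    have hkey := key_lemma g.symm G F hG hF' hFG hGF μ hinv' t₀ s h0' hsIoo hsG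
    -- μ ((↑) '' Ioo (F s) (G s)) = 0, but this is a neighbourhood of x
    have hU : (((↑) : ℝ → 𝕊) '' Set.Ioo (F s) (G s)) ∈ nhds x := by
      rw [← hsx]
      exact (QuotientAddGroup.isOpenMap_coe _ isOpen_Ioo).mem_nhds
        ⟨s, ⟨hlt, hsG⟩, rfl⟩
    have := hx _ hU
    rw [hkey] at this
    exact lt_irrefl _ this
  · -- s < F s
    have hGs : G s < s := by
      have : G s < G (F s) := hGm hgt
      rwa [hGF] at this
    have hkey := key_lemma g F G hF hG hGF hFG μ hinv t₀ s h0 hsIoo hgt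
    have hU : (((↑) : ℝ → 𝕊) '' Set.Ioo (G s) (F s)) ∈ nhds x := by
      rw [← hsx]
      exact (QuotientAddGroup.isOpenMap_coe _ isOpen_Ioo).mem_nhds
        ⟨s, ⟨hGs, hgt⟩, rfl⟩
    have := hx _ hU
    rw [hkey] at this
    exact lt_irrefl _ this
end
end

section
/- Let G be a finitely generated group with an orientation preserving action on the circle by homeomorphisms and let μ be a G-invariant Borel probability measure. If H_1(G,ℤ) = 0, i.e., G is equal to its commutator subgroup (G is perfect), then G acts with a global fixed point: there exists a point of the circle fixed by every element of G. -/
noncomputable section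

open MeasureTheory Set
open scoped ENNReal

namespace S10

instance : Fact ((0:ℝ) < 1) := ⟨zero_lt_one⟩

lemma map_add_int {F : ℝ → ℝ} (h3 : ∀ x : ℝ, F (x + 1) = F x + 1) (x : ℝ) (n : ℤ) :
    F (x + n) = F x + n := by
  induction n using Int.induction_on with
  | zero => simp
  | succ k ih =>
      have h := h3 (x + (k : ℤ))
      push_cast at ih h ⊢
      rw [show x + ((k:ℝ) + 1) = x + (k:ℝ) + 1 by ring, h, ih]; ring
  | pred k ih =>
      have h := h3 (x + (-(k:ℝ) - 1))
      push_cast at ih h ⊢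
      rw [show x + (-(k:ℝ) - 1) + 1 = x + -(k:ℝ) by ring] at h
      linarith

lemma surj {F : ℝ → ℝ} (hc : Continuous F) (h3 : ∀ x : ℝ, F (x + 1) = F x + 1) :
    Function.Surjective F := by
  intro y
  obtain ⟨n, hn⟩ := exists_nat_ge (F 0 - y)
  obtain ⟨m, hm⟩ := exists_nat_ge (y - F 0)
  have h1 : F (0 + ((-(n:ℤ) : ℤ) : ℝ)) = F 0 + ((-(n:ℤ) : ℤ) : ℝ) := map_add_int h3 0 _
  have h2 : F (0 + (((m:ℤ) : ℤ) : ℝ)) = F 0 + (((m:ℤ) : ℤ) : ℝ) := map_add_int h3 0 _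
  push_cast at h1 h2
  rw [zero_add] at h1 h2
  have hab : (-(n:ℝ)) ≤ (m:ℝ) := by
    have := n.cast_nonneg (α := ℝ); have := m.cast_nonneg (α := ℝ); linarith
  have hy : y ∈ Icc (F (-(n:ℝ))) (F (m:ℝ)) := ⟨by rw [h1]; linarith, by rw [h2]; linarith⟩
  obtain ⟨x, _, hx⟩ := intermediate_value_Icc hab hc.continuousOn hy
  exact ⟨x, hx⟩

lemma coe_int_eq_zero (n : ℤ) : (((n:ℝ)) : 𝕊) = 0 :=
  (AddCircle.coe_eq_zero_iff _).mpr ⟨n, by simp⟩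

lemma coe_add_int (y : ℝ) (n : ℤ) : ((y + (n:ℝ) : ℝ) : 𝕊) = (y : 𝕊) := by
  have : ((y + (n:ℝ) : ℝ) : 𝕊) = (y : 𝕊) + (((n:ℝ)) : 𝕊) := rfl
  rw [this, coe_int_eq_zero, add_zero]

lemma coe_fract (y : ℝ) : ((Int.fract y : ℝ) : 𝕊) = (y : 𝕊) := by
  rw [show Int.fract y = y + ((-⌊y⌋ : ℤ) : ℝ) by rw [Int.fract]; push_cast; ring,
    coe_add_int]

/-- displacement function on the circle -/
def disp (F : ℝ → ℝ) : 𝕊 → ℝ := AddCircle.liftIco 1 0 (fun y => F y - y)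

lemma disp_coe {F : ℝ → ℝ} (h3 : ∀ x : ℝ, F (x + 1) = F x + 1) (y : ℝ) :
    disp F (y : 𝕊) = F y - y := by
  have hmem : Int.fract y ∈ Ico (0:ℝ) (0 + 1) :=
    ⟨Int.fract_nonneg y, by rw [zero_add]; exact Int.fract_lt_one y⟩
  have h1 : disp F ((Int.fract y : ℝ) : 𝕊) = F (Int.fract y) - Int.fract y :=
    AddCircle.liftIco_coe_apply (f := fun t => F t - t) hmem
  rw [← coe_fract y, h1,
    show Int.fract y = y + ((-⌊y⌋ : ℤ) : ℝ) by rw [Int.fract]; push_cast; ring,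
    map_add_int h3]
  push_cast; ring

lemma disp_continuous {F : ℝ → ℝ} (hc : Continuous F)
    (h3 : ∀ x : ℝ, F (x + 1) = F x + 1) : Continuous (disp F) := by
  apply AddCircle.liftIco_continuous
  · show F 0 - 0 = F (0 + 1) - (0 + 1)
    rw [h3]; ring
  · exact (hc.sub continuous_id).continuousOn

lemma disp_integrable {F : ℝ → ℝ} (hc : Continuous F)
    (h3 : ∀ x : ℝ, F (x + 1) = F x + 1) (μ : Measure 𝕊) [IsFiniteMeasure μ] :
    Integrable (disp F) μ := by
  apply Continuous.integrable_of_hasCompactSupport (disp_continuous hc h3)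
  exact IsCompact.of_isClosed_subset isCompact_univ (isClosed_tsupport _) (subset_univ _)

lemma cont_of_lift {f : Equiv.Perm 𝕊} {F : ℝ → ℝ} (hF : IsOPLift f F) :
    Continuous ⇑f := by
  rw [(QuotientAddGroup.isQuotientMap_mk _).continuous_iff]
  have : (⇑f ∘ (QuotientAddGroup.mk : ℝ → 𝕊)) = fun x : ℝ => ((F x : ℝ) : 𝕊) :=
    funext fun x => hF.2.2.2 x
  rw [this]
  exact Continuous.comp continuous_quotient_mk' hF.1

lemma coe_surj : Function.Surjective (fun x : ℝ => (x : 𝕊)) :=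
  QuotientAddGroup.mk_surjective

lemma tau_comp {f g : Equiv.Perm 𝕊} {F Gf : ℝ → ℝ}
    (hF : IsOPLift f F) (hG : IsOPLift g Gf)
    (μ : Measure 𝕊) [IsProbabilityMeasure μ]
    (hinvg : Measure.map (⇑g) μ = μ) :
    ∫ z, disp (F ∘ Gf) z ∂μ = (∫ z, disp F z ∂μ) + ∫ z, disp Gf z ∂μ := by
  have h3FG : ∀ x : ℝ, (F ∘ Gf) (x + 1) = (F ∘ Gf) x + 1 := fun x => by
    simp only [Function.comp_apply, hG.2.2.1, hF.2.2.1]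
  have key : ∀ z : 𝕊, disp (F ∘ Gf) z = disp F (g z) + disp Gf z := by
    intro z; obtain ⟨y, rfl⟩ := QuotientAddGroup.mk_surjective z
    show disp (F ∘ Gf) (y : 𝕊) = disp F (g (y:𝕊)) + disp Gf (y:𝕊)
    rw [disp_coe h3FG, hG.2.2.2, disp_coe hF.2.2.1, disp_coe hG.2.2.1]
    simp only [Function.comp_apply]; ring
  have hgmeas : AEMeasurable (⇑g) μ := (cont_of_lift hG).measurable.aemeasurable
  have hdFsm : AEStronglyMeasurable (disp F) (Measure.map (⇑g) μ) := by
    rw [hinvg]; exact (disp_continuous hF.1 hF.2.2.1).aestronglyMeasurable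
  have hint1 : Integrable (fun z => disp F (g z)) μ := by
    have := (integrable_map_measure hdFsm hgmeas).mp (by rw [hinvg]; exact disp_integrable hF.1 hF.2.2.1 μ)
    exact this
  have hint2 : Integrable (disp Gf) μ := disp_integrable hG.1 hG.2.2.1 μ
  calc ∫ z, disp (F ∘ Gf) z ∂μ = ∫ z, (disp F (g z) + disp Gf z) ∂μ := by
        exact integral_congr_ae (Filter.Eventually.of_forall key)
    _ = (∫ z, disp F (g z) ∂μ) + ∫ z, disp Gf z ∂μ := integral_add hint1 hint2
    _ = (∫ z, disp F z ∂μ) + ∫ z, disp Gf z ∂μ := by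
        rw [← integral_map hgmeas hdFsm, hinvg]

lemma lift_pt_diff {f : Equiv.Perm 𝕊} {F F' : ℝ → ℝ}
    (hF : IsOPLift f F) (hF' : IsOPLift f F') (x : ℝ) :
    ∃ n : ℤ, F' x = F x + n := by
  have h : ((F x : ℝ) : 𝕊) = ((F' x : ℝ) : 𝕊) := (hF.2.2.2 x).symm.trans (hF'.2.2.2 x)
  have h0 : ((F x - F' x : ℝ) : 𝕊) = 0 := by
    have : ((F x - F' x : ℝ) : 𝕊) = ((F x : ℝ) : 𝕊) - ((F' x : ℝ) : 𝕊) := rfl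
    rw [this, h, sub_self]
  obtain ⟨n, hn⟩ := (AddCircle.coe_eq_zero_iff _).mp h0
  refine ⟨-n, ?_⟩
  have : (n : ℝ) = F x - F' x := by simpa using hn
  push_cast
  linarith

lemma lift_diff_int {f : Equiv.Perm 𝕊} {F F' : ℝ → ℝ}
    (hF : IsOPLift f F) (hF' : IsOPLift f F') :
    ∃ n : ℤ, ∀ x, F' x = F x + n := by
  obtain ⟨n₀, hn₀⟩ := lift_pt_diff hF hF' 0
  refine ⟨n₀, fun x => ?_⟩
  obtain ⟨n, hn⟩ := lift_pt_diff hF hF' x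
  rcases eq_or_ne n n₀ with rfl | hne
  · exact hn
  · exfalso
    set m : ℤ := min n n₀ with hm
    have hcon : ContinuousOn (fun y => F' y - F y) (uIcc 0 x) :=
      (hF'.1.sub hF.1).continuousOn
    have e0 : (fun y => F' y - F y) 0 = ((n₀ : ℤ) : ℝ) := by simp [hn₀]
    have ex : (fun y => F' y - F y) x = ((n : ℤ) : ℝ) := by simp [hn]
    have hmem : ((m:ℝ) + 1/2) ∈ uIcc ((fun y => F' y - F y) 0) ((fun y => F' y - F y) x) := by
      rw [e0, ex, Set.mem_uIcc]
      rcases hne.lt_or_gt with h | h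
      · have h1 : (n:ℝ) + 1 ≤ (n₀:ℝ) := by exact_mod_cast h
        have h2 : (m:ℝ) = (n:ℝ) := by rw [hm, min_eq_left h.le]
        right; constructor <;> linarith
      · have h1 : (n₀:ℝ) + 1 ≤ (n:ℝ) := by exact_mod_cast h
        have h2 : (m:ℝ) = (n₀:ℝ) := by rw [hm, min_eq_right h.le]
        left; constructor <;> linarith
    obtain ⟨z, _, hz⟩ := intermediate_value_uIcc hcon hmem
    simp only at hz
    obtain ⟨k, hk⟩ := lift_pt_diff hF hF' z
    have hkm : (k : ℝ) = (m:ℝ) + 1/2 := by rw [hk] at hz; linarith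
    have h2 : ((2*k : ℤ) : ℝ) = ((2*m + 1 : ℤ) : ℝ) := by push_cast; linarith
    have := Int.cast_injective h2
    omega

lemma inv_lift {f : Equiv.Perm 𝕊} {F : ℝ → ℝ} (hF : IsOPLift f F) :
    ∃ Fi : ℝ → ℝ, IsOPLift f.symm Fi ∧ (∀ y, F (Fi y) = y) ∧ (∀ y, Fi (F y) = y) := by
  obtain ⟨hc, hm, h3, hproj⟩ := hF
  set e : ℝ ≃o ℝ := StrictMono.orderIsoOfSurjective F hm (surj hc h3) with he
  have heF : ∀ y, e y = F y := fun y => rfl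
  have hes : ∀ y, F (e.symm y) = y := fun y => by rw [← heF]; exact e.apply_symm_apply y
  have h3i : ∀ x : ℝ, e.symm (x + 1) = e.symm x + 1 := by
    intro x
    apply hm.injective
    rw [hes, h3, hes]
  refine ⟨⇑e.symm, ⟨?_, e.symm.strictMono, h3i, ?_⟩, hes, fun y => e.symm_apply_apply y⟩
  · exact e.symm.continuous
  · intro x
    rw [Equiv.symm_apply_eq, hproj, hes]

lemma no_move (f : Equiv.Perm 𝕊) (F : ℝ → ℝ) (hF : IsOPLift f F)
    (μ : Measure 𝕊) [IsProbabilityMeasure μ]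
    (hinv' : Measure.map (⇑f.symm) μ = μ)
    (hτ : ∫ z, disp F z ∂μ = 0) (x : ℝ)
    (hx : ∀ U : Set 𝕊, IsOpen U → (x:𝕊) ∈ U → 0 < μ U)
    (hmove : x < F x) : False := by
  obtain ⟨hc, hm, h3, hproj⟩ := hF
  have hFlift : IsOPLift f F := ⟨hc, hm, h3, hproj⟩
  -- Step 1: there is a fixed point of F
  have hKne : ∃ k : ℝ, F k = k := by
    by_contra hK
    push_neg at hK
    have hpos : ∀ y, y < F y := by
      intro y
      rcases lt_or_gt_of_ne (hK y) with h | h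
      · exfalso
        have hcon : ContinuousOn (fun t => F t - t) (uIcc y x) :=
          (hc.sub continuous_id).continuousOn
        have h0 : (0:ℝ) ∈ uIcc ((fun t => F t - t) y) ((fun t => F t - t) x) := by
          rw [Set.mem_uIcc]
          left; constructor <;> simp <;> linarith
        obtain ⟨z, _, hz⟩ := intermediate_value_uIcc hcon h0
        simp only at hz
        exact hK z (by linarith)
      · exact h
    obtain ⟨t0, ht0mem, ht0⟩ := isCompact_Icc.exists_isMinOn
      (nonempty_Icc.mpr (zero_le_one (α := ℝ)))
      ((hc.sub continuous_id).continuousOn (s := Icc (0:ℝ) 1))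
    set ε := F t0 - t0 with hε'
    have hε : 0 < ε := by have := hpos t0; simp [hε']; linarith
    have hge : ∀ z : 𝕊, ε ≤ disp F z := by
      intro z; obtain ⟨y, rfl⟩ := QuotientAddGroup.mk_surjective z
      have h1 : disp F ((y:ℝ) : 𝕊) = disp F ((Int.fract y : ℝ) : 𝕊) := by rw [coe_fract]
      rw [h1, disp_coe h3]
      have hmem : Int.fract y ∈ Icc (0:ℝ) 1 :=
        ⟨Int.fract_nonneg y, (Int.fract_lt_one y).le⟩
      exact ht0 hmem
    have hlow : ε ≤ ∫ z, disp F z ∂μ := by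
      have h1 : ∫ _ : 𝕊, ε ∂μ = ε := by simp
      rw [← h1]
      exact integral_mono (integrable_const ε) (disp_integrable hc h3 μ)
        (fun z => hge z)
    rw [hτ] at hlow
    linarith
  obtain ⟨k, hk⟩ := hKne
  -- fixed point set
  set K := {y : ℝ | F y = y} with hKdef
  have hKclosed : IsClosed K := isClosed_eq hc continuous_id
  have hKper : ∀ y, y ∈ K → ∀ n : ℤ, y + (n:ℝ) ∈ K := by
    intro y hy n
    have : F (y + (n:ℝ)) = F y + (n:ℝ) := map_add_int h3 y n
    simp only [hKdef, mem_setOf_eq] at hy ⊢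
    rw [this, hy]
  -- a = sup of fixed points ≤ x
  have hAne : (K ∩ Iic x).Nonempty := by
    refine ⟨k + ((-⌈k - x⌉ : ℤ) : ℝ), hKper k hk _, ?_⟩
    have := Int.le_ceil (k - x)
    simp only [mem_Iic]
    push_cast
    linarith
  have hAbdd : BddAbove (K ∩ Iic x) := ⟨x, fun y hy => hy.2⟩
  set a := sSup (K ∩ Iic x) with ha
  have haK : a ∈ K ∩ Iic x := (hKclosed.inter isClosed_Iic).csSup_mem hAne hAbdd
  have haFix : F a = a := haK.1
  have hax : a < x := by
    have hle : a ≤ x := haK.2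
    rcases hle.lt_or_eq with h | h
    · exact h
    · exfalso; rw [h] at haFix; linarith
  -- b = inf of fixed points ≥ x
  have hxa1 : x < a + 1 := by
    by_contra h
    push_neg at h
    have h1 : a + ((1:ℤ):ℝ) ∈ K ∩ Iic x := ⟨hKper a haK.1 1, by push_cast; exact h⟩
    have := le_csSup hAbdd h1
    push_cast at this
    linarith
  have hBne : (K ∩ Ici x).Nonempty := by
    refine ⟨a + ((1:ℤ):ℝ), hKper a haK.1 1, ?_⟩
    simp only [mem_Ici]; push_cast; linarith
  have hBbdd : BddBelow (K ∩ Ici x) := ⟨x, fun y hy => hy.2⟩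
  set b := sInf (K ∩ Ici x) with hb
  have hbK : b ∈ K ∩ Ici x := (hKclosed.inter isClosed_Ici).csInf_mem hBne hBbdd
  have hbFix : F b = b := hbK.1
  have hxb : x < b := by
    have hle : x ≤ b := hbK.2
    rcases hle.lt_or_eq with h | h
    · exact h
    · exfalso; rw [← h] at hbFix; linarith
  have hba : b ≤ a + 1 := by
    apply csInf_le hBbdd
    refine ⟨?_, le_of_lt hxa1⟩
    have := hKper a haK.1 1
    push_cast at this
    exact this
  -- no fixed points in (a, b)
  have hnofix : ∀ z, z ∈ Ioo a b → F z ≠ z := by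
    intro z hz hzfix
    rcases le_total z x with h' | h'
    · have : z ≤ a := le_csSup hAbdd ⟨hzfix, h'⟩
      linarith [hz.1]
    · have : b ≤ z := csInf_le hBbdd ⟨hzfix, h'⟩
      linarith [hz.2]
  have hxmem : x ∈ Ioo a b := ⟨hax, hxb⟩
  -- all points in (a,b) move up
  have hup : ∀ y, y ∈ Ioo a b → y < F y := by
    intro y hy
    rcases lt_trichotomy y (F y) with h | h | h
    · exact h
    · exact absurd h.symm (hnofix y hy)
    · exfalso
      have hcon : ContinuousOn (fun t => F t - t) (uIcc y x) :=
        (hc.sub continuous_id).continuousOn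
      have h0 : (0:ℝ) ∈ uIcc ((fun t => F t - t) y) ((fun t => F t - t) x) := by
        rw [Set.mem_uIcc]
        left; constructor <;> simp <;> linarith
      obtain ⟨z, hzmem, hz⟩ := intermediate_value_uIcc hcon h0
      simp only at hz
      have hoc : Set.OrdConnected (Ioo a b) := Set.ordConnected_Ioo
      have hsubU : uIcc y x ⊆ Ioo a b := hoc.uIcc_subset hy hxmem
      have hzIoo : z ∈ Ioo a b := hsubU hzmem
      exact hnofix z hzIoo (by linarith)
  have hmap : ∀ y, y ∈ Ioo a b → F y ∈ Ioo a b := fun y hy =>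
    ⟨by rw [← haFix]; exact hm hy.1, by rw [← hbFix]; exact hm hy.2⟩
  -- the forward orbit of x
  set c : ℕ → ℝ := fun n => F^[n] x with hcdef
  have hc0 : c 0 = x := rfl
  have hcS : ∀ n, c (n+1) = F (c n) := fun n => Function.iterate_succ_apply' F n x
  have hcmem : ∀ n, c n ∈ Ioo a b := by
    intro n
    induction n with
    | zero => exact hxmem
    | succ n ih => rw [hcS]; exact hmap _ ih
  have hcmono : StrictMono c :=
    strictMono_nat_of_lt_succ (fun n => by rw [hcS]; exact hup _ (hcmem n))
  -- interval images on circle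
  set I : ℕ → Set 𝕊 := fun n => (fun t : ℝ => (t : 𝕊)) '' Ico (c n) (c (n+1)) with hI
  have hopen : IsOpenMap (fun t : ℝ => (t : 𝕊)) := QuotientAddGroup.isOpenMap_coe
  have hIco_meas : ∀ u v : ℝ, MeasurableSet ((fun t : ℝ => (t : 𝕊)) '' Ico u v) := by
    intro u v
    rcases le_or_gt v u with h | h
    · rw [Ico_eq_empty (not_lt.mpr h)]; simp
    · rw [← Set.Ioo_insert_left h, Set.image_insert_eq]
      exact ((hopen _ isOpen_Ioo).measurableSet).insert _
  -- f preserves measures of measurable sets forward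
  have hfcont : Continuous ⇑f := cont_of_lift hFlift
  have hfscont : Continuous ⇑f.symm :=
    (Continuous.homeoOfEquivCompactToT2 (f := f) hfcont).symm.continuous
  have hmeasf : ∀ S : Set 𝕊, MeasurableSet S → μ (⇑f '' S) = μ S := by
    intro S hS
    rw [Equiv.image_eq_preimage_symm]
    rw [← Measure.map_apply hfscont.measurable hS, hinv']
  have himg : ∀ u v : ℝ, ⇑f '' ((fun t : ℝ => (t : 𝕊)) '' Ico u v)
      = (fun t : ℝ => (t : 𝕊)) '' Ico (F u) (F v) := by
    intro u v
    rw [← Set.image_comp]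
    have hcomp : (⇑f ∘ fun t : ℝ => (t : 𝕊)) = (fun t : ℝ => (t : 𝕊)) ∘ F :=
      funext fun t => hproj t
    rw [hcomp, Set.image_comp]
    set e : ℝ ≃o ℝ := StrictMono.orderIsoOfSurjective F hm (surj hc h3) with he
    have hcoe : ⇑e = F := rfl
    have himF : F '' Ico u v = Ico (F u) (F v) := by
      rw [← hcoe]; exact e.image_Ico u v
    rw [himF]
  have hIeq : ∀ n, μ (I n) = μ (I 0) := by
    intro n
    induction n with
    | zero => rfl
    | succ n ih =>
        have h1 : I (n+1) = ⇑f '' I n := by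
          rw [hI]
          simp only
          rw [himg, hcS (n+1), hcS n]
        rw [h1, hmeasf _ (hIco_meas _ _), ih]
  -- injectivity of the projection on (a, a+1)
  have hinj : ∀ u v : ℝ, u ∈ Ioo a (a+1) → v ∈ Ioo a (a+1) → (u:𝕊) = (v:𝕊) → u = v := by
    intro u v hu hv huv
    exact (AddCircle.coe_eq_coe_iff_of_mem_Ico (a := a)
      ⟨hu.1.le, hu.2⟩ ⟨hv.1.le, hv.2⟩).mp huv
  have hsubset : ∀ n, Ico (c n) (c (n+1)) ⊆ Ioo a (a+1) := by
    intro n t ht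
    refine ⟨lt_of_lt_of_le (hcmem n).1 ht.1, lt_of_lt_of_le ?_ hba⟩
    exact lt_trans ht.2 (hcmem (n+1)).2
  have hdisj : ∀ i j : ℕ, i ≠ j → Disjoint (I i) (I j) := by
    intro i j hij
    rw [Set.disjoint_left]
    rintro z ⟨u, hu, rfl⟩ ⟨v, hv, hvz⟩
    have := hinj v u (hsubset _ hv) (hsubset _ hu) hvz
    subst this
    rcases hij.lt_or_gt with h | h
    · have : c (i+1) ≤ c j := hcmono.monotone h
      linarith [hu.2, hv.1]
    · have : c (j+1) ≤ c i := hcmono.monotone h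
      linarith [hu.1, hv.2]
  -- measure of I 0 is zero
  have hI0 : μ (I 0) = 0 := by
    by_contra h0
    have hfin : μ (I 0) ≠ ⊤ := measure_ne_top μ _
    obtain ⟨N, hN⟩ := ENNReal.exists_nat_gt (show 1 / μ (I 0) ≠ ⊤ by
      simp [ENNReal.div_eq_top, h0])
    have hN1 : 1 < (N : ℝ≥0∞) * μ (I 0) :=
      (ENNReal.div_lt_iff (Or.inl h0) (Or.inl hfin)).mp hN
    have hle : (N : ℝ≥0∞) * μ (I 0) ≤ 1 := by
      have hsum : ∑ n ∈ Finset.range N, μ (I n) = μ (⋃ n ∈ Finset.range N, I n) := by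
        rw [measure_biUnion_finset ?_ (fun n _ => hIco_meas _ _)]
        intro i _ j _ hij
        exact hdisj i j hij
      have hconst : ∑ n ∈ Finset.range N, μ (I n) = (N : ℝ≥0∞) * μ (I 0) := by
        rw [Finset.sum_congr rfl (fun n _ => hIeq n), Finset.sum_const,
          Finset.card_range, nsmul_eq_mul]
      rw [← hconst, hsum]
      exact le_trans (measure_mono (subset_univ _)) (le_of_eq measure_univ)
    exact absurd hN1 (not_lt.mpr hle)
  -- the backward step
  obtain ⟨Fi, hFi, hFFi, hFiF⟩ := inv_lift hFlift
  have hFix : F (Fi x) = x := hFFi x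
  have hFia : Fi a = a := by
    calc Fi a = Fi (F a) := by rw [haFix]
      _ = a := hFiF a
  have hFib : Fi b = b := by
    calc Fi b = Fi (F b) := by rw [hbFix]
      _ = b := hFiF b
  have hximem : Fi x ∈ Ioo a b := by
    constructor
    · have h := hFi.2.1 hax
      rwa [hFia] at h
    · have h := hFi.2.1 hxb
      rwa [hFib] at h
  have hxix : Fi x < x := by
    have := hup _ hximem
    rwa [hFix] at this
  have hIm1 : μ ((fun t : ℝ => (t : 𝕊)) '' Ico (Fi x) x) = μ (I 0) := by
    rw [← hmeasf _ (hIco_meas (Fi x) x), himg, hFix]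
    have : I 0 = (fun t : ℝ => (t : 𝕊)) '' Ico (c 0) (c 1) := rfl
    rw [this, hc0, hcS 0, hc0]
  -- contradiction with positivity at x
  have hUopen : IsOpen ((fun t : ℝ => (t : 𝕊)) '' Ioo (Fi x) (F x)) :=
    hopen _ isOpen_Ioo
  have hUmem : ((x:ℝ) : 𝕊) ∈ (fun t : ℝ => (t : 𝕊)) '' Ioo (Fi x) (F x) :=
    ⟨x, ⟨hxix, hmove⟩, rfl⟩
  have hpos := hx _ hUopen hUmem
  have hUsub : ((fun t : ℝ => (t : 𝕊)) '' Ioo (Fi x) (F x)) ⊆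
      ((fun t : ℝ => (t : 𝕊)) '' Ico (Fi x) x) ∪ I 0 := by
    rintro z ⟨t, ht, rfl⟩
    rcases lt_or_ge t x with h | h
    · exact Or.inl ⟨t, ⟨ht.1.le, h⟩, rfl⟩
    · refine Or.inr ⟨t, ⟨?_, ?_⟩, rfl⟩
      · rw [hc0]; exact h
      · rw [hcS 0, hc0]; exact ht.2
  have hzero : μ ((fun t : ℝ => (t : 𝕊)) '' Ioo (Fi x) (F x)) = 0 := by
    have h1 := measure_mono (μ := μ) hUsub
    have h2 := measure_union_le (μ := μ) ((fun t : ℝ => (t : 𝕊)) '' Ico (Fi x) x) (I 0)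
    have h3 := le_trans h1 h2
    rw [hIm1, hI0] at h3
    simpa using h3
  rw [hzero] at hpos
  exact lt_irrefl 0 hpos

lemma fix_pt (f : Equiv.Perm 𝕊) (F : ℝ → ℝ) (hF : IsOPLift f F)
    (μ : Measure 𝕊) [IsProbabilityMeasure μ]
    (hinvf : Measure.map (⇑f) μ = μ) (hinv' : Measure.map (⇑f.symm) μ = μ)
    (hτ : ∫ z, disp F z ∂μ = 0) (x : ℝ)
    (hx : ∀ U : Set 𝕊, IsOpen U → (x:𝕊) ∈ U → 0 < μ U) :
    f ((x:ℝ) : 𝕊) = ((x:ℝ) : 𝕊) := by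
  rcases lt_trichotomy x (F x) with h | h | h
  · exact (no_move f F hF μ hinv' hτ x hx h).elim
  · rw [hF.2.2.2 x, ← h]
  · obtain ⟨Fi, hFi, hFFi, hFiF⟩ := inv_lift hF
    have h3c : ∀ t : ℝ, (F ∘ Fi) (t + 1) = (F ∘ Fi) t + 1 := fun t => by
      simp only [Function.comp_apply, hFi.2.2.1, hF.2.2.1]
    have hτi : ∫ z, disp Fi z ∂μ = 0 := by
      have hcompid : ∀ z : 𝕊, disp (F ∘ Fi) z = 0 := by
        intro z; obtain ⟨y, rfl⟩ := QuotientAddGroup.mk_surjective z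
        rw [disp_coe h3c]
        simp [Function.comp_apply, hFFi]
      have hTC := tau_comp hF hFi μ hinv'
      have h0 : ∫ z, disp (F ∘ Fi) z ∂μ = 0 := by
        rw [integral_congr_ae (Filter.Eventually.of_forall hcompid)]
        simp
      rw [h0, hτ] at hTC
      linarith
    have hmove : x < Fi x := by
      have hlt : F x < F (Fi x) := by rw [hFFi]; exact h
      exact hF.2.1.lt_iff_lt.mp hlt
    have hsymminv : Measure.map (⇑f.symm.symm) μ = μ := by
      rw [Equiv.symm_symm]; exact hinvf
    exact (no_move f.symm Fi hFi μ hsymminv hτi x hx hmove).elim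

end S10

open S10

/-- Let `G` be a finitely generated group with an orientation preserving
action on the circle by homeomorphisms preserving a Borel probability measure `μ`.  If
`H₁(G, ℤ) = 0`, i.e. `G` is perfect, then `G` acts with a global fixed point. -/
theorem perfect_invariant_measure_global_fixed_point
    (G : Type*) [Group G] [Group.FG G]
    (ρ : G →* Equiv.Perm 𝕊) (hop : ∀ g : G, IsOPHomeo (ρ g))
    (μ : Measure 𝕊) [IsProbabilityMeasure μ]
    (hinv : ∀ g : G, Measure.map (ρ g) μ = μ)
    (hperf : commutator G = ⊤) :
    ∃ x : 𝕊, ∀ g : G, ρ g x = x := by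

  classical
  choose L hL using hop
  set τ : G → ℝ := fun g => ∫ z, disp (L g) z ∂μ with hτdef
  have hcompLift : ∀ g h : G, IsOPLift (ρ (g * h)) (L g ∘ L h) := by
    intro g h
    refine ⟨(hL g).1.comp (hL h).1, (hL g).2.1.comp (hL h).2.1, fun t => by
      simp only [Function.comp_apply, (hL h).2.2.1, (hL g).2.2.1], fun t => ?_⟩
    rw [map_mul]
    show (ρ g) ((ρ h) (t : 𝕊)) = _
    rw [(hL h).2.2.2 t, (hL g).2.2.2 (L h t)]
    rfl
  have hτmul : ∀ g h : G, ∃ n : ℤ, τ (g * h) = τ g + τ h + (n:ℝ) := by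
    intro g h
    obtain ⟨n, hn⟩ := lift_diff_int (hcompLift g h) (hL (g * h))
    have h3c : ∀ t : ℝ, (L g ∘ L h) (t + 1) = (L g ∘ L h) t + 1 := fun t => by
      simp only [Function.comp_apply, (hL h).2.2.1, (hL g).2.2.1]
    have hdisp : ∀ z : 𝕊, disp (L (g * h)) z = disp (L g ∘ L h) z + (n:ℝ) := by
      intro z; obtain ⟨y, rfl⟩ := QuotientAddGroup.mk_surjective z
      rw [disp_coe (hL (g * h)).2.2.1, disp_coe h3c, hn y]; ring
    refine ⟨n, ?_⟩
    have hint : Integrable (disp (L g ∘ L h)) μ :=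
      disp_integrable ((hL g).1.comp (hL h).1) h3c μ
    calc τ (g * h) = ∫ z, (disp (L g ∘ L h) z + (n:ℝ)) ∂μ :=
          integral_congr_ae (Filter.Eventually.of_forall hdisp)
      _ = (∫ z, disp (L g ∘ L h) z ∂μ) + (n:ℝ) := by
          rw [integral_add hint (integrable_const _)]; simp
      _ = τ g + τ h + (n:ℝ) := by
          rw [tau_comp (hL g) (hL h) μ (hinv h)]
  set Φ : G →* Multiplicative 𝕊 := MonoidHom.mk'
    (fun g => Multiplicative.ofAdd ((τ g : ℝ) : 𝕊)) (by
      intro g h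
      obtain ⟨n, hn⟩ := hτmul g h
      have hcast : ((τ (g * h) : ℝ) : 𝕊) = ((τ g + τ h : ℝ) : 𝕊) := by
        rw [hn]; exact coe_add_int _ n
      have hsplit : ((τ g + τ h : ℝ) : 𝕊) = ((τ g : ℝ) : 𝕊) + ((τ h : ℝ) : 𝕊) := rfl
      show Multiplicative.ofAdd ((τ (g*h) : ℝ) : 𝕊) = _
      rw [hcast, hsplit, ofAdd_add]) with hΦdef
  have hker : ∀ g : G, Φ g = 1 := by
    intro g
    have h1 : g ∈ commutator G := hperf ▸ Subgroup.mem_top g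
    have h2 : commutator G ≤ Φ.ker := Abelianization.commutator_subset_ker Φ
    simpa [MonoidHom.mem_ker] using h2 h1
  have hτint : ∀ g : G, ∃ n : ℤ, (n:ℝ) = τ g := by
    intro g
    have hz : ((τ g : ℝ) : 𝕊) = 0 := by
      have h1 := hker g
      have h2 : Multiplicative.toAdd (Φ g) = Multiplicative.toAdd (1 : Multiplicative 𝕊) := by
        rw [h1]
      simpa [hΦdef] using h2
    obtain ⟨n, hn⟩ := (AddCircle.coe_eq_zero_iff _).mp hz
    exact ⟨n, by simpa using hn⟩
  have hzero : ∀ g : G, ∃ F : ℝ → ℝ, IsOPLift (ρ g) F ∧ ∫ z, disp F z ∂μ = 0 := by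
    intro g
    obtain ⟨n, hn⟩ := hτint g
    have h3c : ∀ t : ℝ, (fun x => L g x + ((-n:ℤ):ℝ)) (t + 1)
        = (fun x => L g x + ((-n:ℤ):ℝ)) t + 1 := fun t => by
      simp only; rw [(hL g).2.2.1]; ring
    refine ⟨fun x => L g x + ((-n:ℤ):ℝ), ⟨(hL g).1.add continuous_const,
      fun u v huv => by simpa using add_lt_add_right ((hL g).2.1 huv) ((-n:ℤ):ℝ),
      h3c, fun t => ?_⟩, ?_⟩
    · rw [coe_add_int (L g t) (-n)]
      exact (hL g).2.2.2 t
    · have hdisp : ∀ z : 𝕊, disp (fun x => L g x + ((-n:ℤ):ℝ)) z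
          = disp (L g) z + ((-n:ℤ):ℝ) := by
        intro z; obtain ⟨y, rfl⟩ := QuotientAddGroup.mk_surjective z
        rw [disp_coe h3c, disp_coe (hL g).2.2.1]; push_cast; ring
      rw [integral_congr_ae (Filter.Eventually.of_forall hdisp),
        integral_add (disp_integrable (hL g).1 (hL g).2.2.1 μ) (integrable_const _)]
      have : ∫ z, disp (L g) z ∂μ = τ g := rfl
      rw [this]
      simp only [integral_const, measure_univ, probReal_univ, ENNReal.toReal_one, smul_eq_mul, one_mul]
      push_cast
      linarith
  choose L0 hL0 using hzero
  obtain ⟨x0, hx0⟩ : ∃ z : 𝕊, ∀ U : Set 𝕊, IsOpen U → z ∈ U → 0 < μ U := by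
    by_contra hcon
    push_neg at hcon
    choose U hUo hUm hU0 using hcon
    obtain ⟨s, hs⟩ := isCompact_univ.elim_finite_subcover U hUo
      (fun z _ => mem_iUnion.mpr ⟨z, hUm z⟩)
    have h1 : μ univ ≤ ∑ i ∈ s, μ (U i) :=
      le_trans (measure_mono hs) (measure_biUnion_finset_le s U)
    have h2 : ∑ i ∈ s, μ (U i) = 0 :=
      Finset.sum_eq_zero (fun i _ => le_antisymm (hU0 i) (zero_le))
    rw [measure_univ, h2] at h1
    simpa using h1
  obtain ⟨x, rfl⟩ := QuotientAddGroup.mk_surjective x0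
  refine ⟨(x : 𝕊), fun g => ?_⟩
  have hsymm : Measure.map (⇑(ρ g).symm) μ = μ := by
    have h1 : ⇑(ρ g).symm = ⇑(ρ g⁻¹) := by rw [map_inv]; rfl
    rw [h1]
    exact hinv g⁻¹
  exact fix_pt (ρ g) (L0 g) (hL0 g).1 μ (hinv g) hsymm (hL0 g).2 x hx0
end
end
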